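/- arXiv:0906.3886 — 8 statements merged into one kernel-verified Lean document; each statement's English description precedes it below -/
import Mathlib

section
/- If Y is a nonnegative random variable with mean μ ∈ (0,∞) and variance σ² ∈ (0,∞), and Y^s is defined on the same probability space with the Y size-biased distribution, satisfying Y^s ≥ Y and Y^s - Y ≤ C almost surely for some constant C > 0, then for all t > 0, P((Y-μ)/σ ≤ -t) ≤ exp(-t²σ²/(2Cμ)). -/
set_option maxHeartbeats 1000000


open MeasureTheory

/-- Left tail concentration bound via a bounded monotone size-bias coupling. -/
theorem sizeBias_left_tail {Ω : Type*} [MeasurableSpace Ω] (P : Measure Ω)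
    [IsProbabilityMeasure P] (Y Ys : Ω → ℝ) (μ σ C : ℝ)
    (hμ : 0 < μ) (hσ : 0 < σ) (hC : 0 < C)
    (hYmeas : Measurable Y) (hYsmeas : Measurable Ys)
    (hYnonneg : ∀ ω, 0 ≤ Y ω)
    (hmean : ∫ ω, Y ω ∂P = μ)
    (hvar : ∫ ω, (Y ω - μ) ^ 2 ∂P = σ ^ 2)
    (hsb : ∀ f : ℝ → ℝ, Integrable (fun ω => Y ω * f (Y ω)) P →
      Integrable (fun ω => f (Ys ω)) P →
      ∫ ω, Y ω * f (Y ω) ∂P = μ * ∫ ω, f (Ys ω) ∂P)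
    (hmono : ∀ᵐ ω ∂P, Y ω ≤ Ys ω)
    (hbdd : ∀ᵐ ω ∂P, Ys ω - Y ω ≤ C) :
    ∀ t > 0, (P {ω | (Y ω - μ) / σ ≤ -t}).toReal ≤
      Real.exp (-(t ^ 2 * σ ^ 2) / (2 * C * μ)) := by
  -- Y is integrable
  have hYint : Integrable Y P := by
    by_contra h
    rw [integral_undef h] at hmean
    exact absurd hmean.symm hμ.ne'
  set M : ℝ → ℝ := fun θ => ∫ ω, Real.exp (-θ * Y ω) ∂P with hMdef
  have hexp_meas : ∀ θ : ℝ, Measurable fun ω => Real.exp (-θ * Y ω) :=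
    fun θ => Real.measurable_exp.comp (hYmeas.const_mul (-θ))
  have hIntExp : ∀ θ : ℝ, 0 ≤ θ → Integrable (fun ω => Real.exp (-θ * Y ω)) P := by
    intro θ hθ
    refine Integrable.mono' (integrable_const 1) (hexp_meas θ).aestronglyMeasurable
      (Filter.Eventually.of_forall fun ω => ?_)
    rw [Real.norm_eq_abs, abs_of_pos (Real.exp_pos _)]
    exact Real.exp_le_one_iff.2 (mul_nonpos_of_nonpos_of_nonneg (by linarith) (hYnonneg ω))
  have hIntYExp : ∀ θ : ℝ, 0 ≤ θ →
      Integrable (fun ω => Y ω * Real.exp (-θ * Y ω)) P := by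
    intro θ hθ
    refine Integrable.mono' hYint ((hYmeas.mul (hexp_meas θ)).aestronglyMeasurable)
      (Filter.Eventually.of_forall fun ω => ?_)
    rw [Real.norm_eq_abs, abs_mul, abs_of_nonneg (hYnonneg ω),
      abs_of_pos (Real.exp_pos _)]
    calc Y ω * Real.exp (-θ * Y ω) ≤ Y ω * 1 := by
          refine mul_le_mul_of_nonneg_left ?_ (hYnonneg ω)
          exact Real.exp_le_one_iff.2
            (mul_nonpos_of_nonpos_of_nonneg (by linarith) (hYnonneg ω))
      _ = Y ω := mul_one _
  have hM0 : M 0 = 1 := by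
    simp [hMdef]
  have hMnonneg : ∀ θ, 0 ≤ M θ :=
    fun θ => integral_nonneg fun ω => (Real.exp_pos _).le
  -- derivative of M for θ > 0
  have hderiv : ∀ θ : ℝ, 0 < θ →
      HasDerivAt M (-∫ ω, Y ω * Real.exp (-θ * Y ω) ∂P) θ := by
    intro θ hθ
    have key := hasDerivAt_integral_of_dominated_loc_of_deriv_le (μ := P)
      (F := fun x ω => Real.exp (-x * Y ω))
      (F' := fun x ω => Real.exp (-x * Y ω) * (-Y ω))
      (x₀ := θ) (bound := Y) (Metric.ball_mem_nhds θ (half_pos hθ))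
      (Filter.Eventually.of_forall fun x => (hexp_meas x).aestronglyMeasurable)
      (hIntExp θ hθ.le)
      (((hexp_meas θ).mul hYmeas.neg).aestronglyMeasurable)
      (Filter.Eventually.of_forall fun ω => ?_) hYint
      (Filter.Eventually.of_forall fun ω x _ => ?_)
    · have := key.2
      have heq : (∫ ω, Real.exp (-θ * Y ω) * (-Y ω) ∂P)
          = -∫ ω, Y ω * Real.exp (-θ * Y ω) ∂P := by
        rw [← integral_neg]
        congr 1 with ω
        ring
      rw [heq] at this
      exact this
    · -- bound on the ball
      intro x hx
      rw [Metric.mem_ball, Real.dist_eq, abs_lt] at hx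
      have hxpos : 0 < x := by linarith
      rw [Real.norm_eq_abs, abs_mul, abs_neg, abs_of_nonneg (hYnonneg ω),
        abs_of_pos (Real.exp_pos _)]
      calc Real.exp (-x * Y ω) * Y ω ≤ 1 * Y ω := by
            refine mul_le_mul_of_nonneg_right ?_ (hYnonneg ω)
            exact Real.exp_le_one_iff.2
              (mul_nonpos_of_nonpos_of_nonneg (by linarith) (hYnonneg ω))
        _ = Y ω := one_mul _
    · -- pointwise derivative
      have h1 : HasDerivAt (fun x : ℝ => -x * Y ω) (-Y ω) x := by
        simpa using (hasDerivAt_id x).neg.mul_const (Y ω)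
      exact h1.exp
  -- differential inequality
  have hdiffineq : ∀ θ : ℝ, 0 < θ →
      (-∫ ω, Y ω * Real.exp (-θ * Y ω) ∂P) ≤ -(μ * Real.exp (-θ * C) * M θ) := by
    intro θ hθ
    have hYs_nonneg : ∀ᵐ ω ∂P, 0 ≤ Ys ω :=
      hmono.mono fun ω h => (hYnonneg ω).trans h
    have hIntYs : Integrable (fun ω => Real.exp (-θ * Ys ω)) P := by
      refine Integrable.mono' (integrable_const 1)
        ((Real.measurable_exp.comp (hYsmeas.const_mul (-θ))).aestronglyMeasurable)
        (hYs_nonneg.mono fun ω hω => ?_)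
      rw [Real.norm_eq_abs, abs_of_pos (Real.exp_pos _)]
      exact Real.exp_le_one_iff.2 (mul_nonpos_of_nonpos_of_nonneg (by linarith) hω)
    have hsb' := hsb (fun x => Real.exp (-θ * x)) (hIntYExp θ hθ.le) hIntYs
    have hYsbound : Real.exp (-θ * C) * M θ ≤ ∫ ω, Real.exp (-θ * Ys ω) ∂P := by
      have hint2 : Integrable (fun ω => Real.exp (-θ * C) * Real.exp (-θ * Y ω)) P :=
        (hIntExp θ hθ.le).const_mul _
      have heq : Real.exp (-θ * C) * M θ
          = ∫ ω, Real.exp (-θ * C) * Real.exp (-θ * Y ω) ∂P := by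
        rw [hMdef, integral_const_mul]
      rw [heq]
      refine integral_mono_ae hint2 hIntYs (hbdd.mono fun ω hω => ?_)
      dsimp only
      rw [← Real.exp_add]
      apply Real.exp_le_exp.2
      nlinarith [hθ.le]
    have h1 : μ * (Real.exp (-θ * C) * M θ) ≤ μ * ∫ ω, Real.exp (-θ * Ys ω) ∂P :=
      mul_le_mul_of_nonneg_left hYsbound hμ.le
    rw [← hsb'] at h1
    linarith
  -- the auxiliary function g
  set E : ℝ → ℝ := fun θ => Real.exp (μ * θ - C * μ * θ ^ 2 / 2) with hEdef
  set g : ℝ → ℝ := fun θ => M θ * E θ with hgdef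
  have hEderiv : ∀ θ : ℝ, HasDerivAt E (E θ * (μ - C * μ * θ)) θ := by
    intro θ
    have h1 : HasDerivAt (fun θ : ℝ => μ * θ - C * μ * θ ^ 2 / 2)
        (μ - C * μ * θ) θ := by
      have := (((hasDerivAt_id θ).const_mul μ).sub
        (((hasDerivAt_pow 2 θ).const_mul (C * μ)).div_const 2))
      exact this.congr_deriv (by norm_num <;> ring)
    exact h1.exp
  have hgderiv : ∀ θ : ℝ, 0 < θ → HasDerivAt g
      ((-∫ ω, Y ω * Real.exp (-θ * Y ω) ∂P) * E θ
        + M θ * (E θ * (μ - C * μ * θ))) θ :=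
    fun θ hθ => (hderiv θ hθ).mul (hEderiv θ)
  have hgderiv_nonpos : ∀ θ : ℝ, 0 < θ → deriv g θ ≤ 0 := by
    intro θ hθ
    rw [(hgderiv θ hθ).deriv]
    have hEpos : 0 < E θ := Real.exp_pos _
    have h1 := hdiffineq θ hθ
    have h2 : 1 + (-θ * C) ≤ Real.exp (-θ * C) := by linarith [Real.add_one_le_exp (-θ * C)]
    have hM := hMnonneg θ
    have key : (-∫ ω, Y ω * Real.exp (-θ * Y ω) ∂P) + M θ * (μ - C * μ * θ) ≤ 0 := by
      nlinarith [mul_le_mul_of_nonneg_left h2 (mul_nonneg hμ.le hM)]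
    nlinarith
  -- continuity of M on Ici 0
  have hMcont : ContinuousOn M (Set.Ici (0 : ℝ)) := by
    intro θ₀ hθ₀
    have : Filter.Tendsto (fun θ => M θ) (nhdsWithin θ₀ (Set.Ici 0)) (nhds (M θ₀)) := by
      apply tendsto_integral_filter_of_dominated_convergence (bound := fun _ => (1 : ℝ))
      · exact Filter.Eventually.of_forall fun θ => (hexp_meas θ).aestronglyMeasurable
      · filter_upwards [self_mem_nhdsWithin] with θ hθ
        refine Filter.Eventually.of_forall fun ω => ?_
        rw [Real.norm_eq_abs, abs_of_pos (Real.exp_pos _)]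
        exact Real.exp_le_one_iff.2
          (mul_nonpos_of_nonpos_of_nonneg (by simp at hθ; linarith) (hYnonneg ω))
      · exact integrable_const 1
      · refine Filter.Eventually.of_forall fun ω => ?_
        exact ((Real.continuous_exp.comp
          ((continuous_id.neg).mul continuous_const)).tendsto θ₀).mono_left
          nhdsWithin_le_nhds
    exact this
  have hgcont : ContinuousOn g (Set.Ici (0 : ℝ)) :=
    hMcont.mul ((Real.continuous_exp.comp (by continuity)).continuousOn)
  have hgdiff : DifferentiableOn ℝ g (interior (Set.Ici (0 : ℝ))) := by
    rw [interior_Ici]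
    exact fun θ hθ => ((hgderiv θ hθ).differentiableAt).differentiableWithinAt
  have hganti : AntitoneOn g (Set.Ici (0 : ℝ)) := by
    refine antitoneOn_of_deriv_nonpos (convex_Ici 0) hgcont hgdiff ?_
    rw [interior_Ici]
    exact fun θ hθ => hgderiv_nonpos θ hθ
  have hg0 : g 0 = 1 := by
    simp [hgdef, hEdef, hM0]
  have hMle : ∀ θ : ℝ, 0 ≤ θ → M θ ≤ Real.exp (-(μ * θ - C * μ * θ ^ 2 / 2)) := by
    intro θ hθ
    have h1 : g θ ≤ 1 := by
      rw [← hg0]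
      exact hganti (Set.self_mem_Ici) hθ hθ
    have hEpos : 0 < E θ := Real.exp_pos _
    have h2 : M θ ≤ 1 / E θ := (le_div_iff₀ hEpos).2 h1
    rw [Real.exp_neg]
    simpa [one_div, hEdef] using h2
  -- Chernoff step
  intro t ht
  set θ : ℝ := t * σ / (C * μ) with hθdef
  have hθpos : 0 < θ := by positivity
  set ε : ℝ := Real.exp (-θ * (μ - t * σ)) with hεdef
  have hεpos : 0 < ε := Real.exp_pos _
  have hsubset : {ω | (Y ω - μ) / σ ≤ -t} ⊆ {ω | ε ≤ Real.exp (-θ * Y ω)} := by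
    intro ω hω
    simp only [Set.mem_setOf_eq] at hω ⊢
    rw [div_le_iff₀ hσ] at hω
    apply Real.exp_le_exp.2
    nlinarith
  have hmarkov := mul_meas_ge_le_integral_of_nonneg
    (Filter.Eventually.of_forall fun ω => (Real.exp_pos (-θ * Y ω)).le)
    (hIntExp θ hθpos.le) ε
  have hPle : (P {ω | (Y ω - μ) / σ ≤ -t}).toReal
      ≤ (P {ω | ε ≤ Real.exp (-θ * Y ω)}).toReal :=
    ENNReal.toReal_mono (measure_ne_top P _) (measure_mono hsubset)
  have hP2 : (P {ω | ε ≤ Real.exp (-θ * Y ω)}).toReal ≤ M θ / ε := by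
    rw [le_div_iff₀ hεpos]
    calc (P {ω | ε ≤ Real.exp (-θ * Y ω)}).toReal * ε
        = ε * (P {ω | ε ≤ Real.exp (-θ * Y ω)}).toReal := mul_comm _ _
      _ ≤ M θ := hmarkov
  have hfinal : M θ / ε ≤ Real.exp (-(t ^ 2 * σ ^ 2) / (2 * C * μ)) := by
    have h1 : M θ / ε ≤ Real.exp (-(μ * θ - C * μ * θ ^ 2 / 2)) / ε :=
      div_le_div_of_nonneg_right (hMle θ hθpos.le) hεpos.le
    refine h1.trans (le_of_eq ?_)
    rw [hεdef, ← Real.exp_sub]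
    congr 1
    rw [hθdef]
    field_simp
    ring
  linarith
end

section
/- If Y is a nonnegative random variable with mean μ ∈ (0,∞) and variance σ² ∈ (0,∞), Y^s is defined on the same space with the Y size-biased distribution, |Y^s - Y| ≤ C almost surely for some C > 0, and the moment generating function m(θ) = E[e^{θY}] is finite at θ = 2/C, then for all t > 0, P((Y-μ)/σ ≥ t) ≤ exp(-t²/(2(A + Bt))) where A = Cμ/σ² and B = C/(2σ). -/
open MeasureTheory ProbabilityTheory

lemma aux_two_sub_mul_exp_le (u : ℝ) (hu : 0 ≤ u) : (2 - u) * Real.exp u ≤ 2 + u := by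
  set F : ℝ → ℝ := fun w => (2 + w) * Real.exp (-w) + w with hFdef
  have hd : ∀ w : ℝ, HasDerivAt F (1 - (1 + w) * Real.exp (-w)) w := by
    intro w
    have h1 : HasDerivAt (fun w : ℝ => 2 + w) 1 w := by
      simpa using (hasDerivAt_id w).const_add (2 : ℝ)
    have h2 : HasDerivAt (fun w : ℝ => Real.exp (-w)) (-Real.exp (-w)) w := by
      simpa [Function.comp_def] using (Real.hasDerivAt_exp (-w)).comp w ((hasDerivAt_id w).neg)
    have h3 := (h1.mul h2).add (hasDerivAt_id w)
    exact h3.congr_deriv (by ring)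
  have hmono : Monotone F := by
    apply monotone_of_deriv_nonneg (fun w => (hd w).differentiableAt)
    intro w
    rw [(hd w).deriv]
    have h1 : (1 + w) * Real.exp (-w) ≤ 1 := by
      rcases le_or_gt (1 + w) 0 with h | h
      · nlinarith [Real.exp_pos (-w)]
      · have h2 : 1 + w ≤ Real.exp w := by linarith [Real.add_one_le_exp w]
        have h3 : Real.exp w * Real.exp (-w) = 1 := by
          rw [← Real.exp_add]; simp
        calc (1 + w) * Real.exp (-w) ≤ Real.exp w * Real.exp (-w) :=
              mul_le_mul_of_nonneg_right h2 (Real.exp_pos _).le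
          _ = 1 := h3
    linarith
  have h := hmono hu
  have hF0 : F 0 = 2 := by simp [hFdef]
  have key : 2 - u ≤ (2 + u) * Real.exp (-u) := by
    have hFu : F u = (2 + u) * Real.exp (-u) + u := rfl
    rw [hF0, hFu] at h; linarith
  have hmul : Real.exp (-u) * Real.exp u = 1 := by rw [← Real.exp_add]; simp
  nlinarith [mul_le_mul_of_nonneg_right key (Real.exp_pos u).le]



lemma aux_key (μ C x : ℝ) (hμ : 0 < μ) (hC : 0 < C) (hx : 0 < x) :
    -(x / (C * μ + C / 2 * x)) * (μ + x) +
      (μ / C) * ((2 + (x / (C * μ + C / 2 * x)) * C) / (2 - (x / (C * μ + C / 2 * x)) * C) - 1)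
      = -(x ^ 2) / (2 * (C * μ + C / 2 * x)) := by
  have hD : (0:ℝ) < C * μ + C / 2 * x := by positivity
  have hD' : (C * μ + C / 2 * x) ≠ 0 := ne_of_gt hD
  have hfrac : (2 + (x / (C * μ + C / 2 * x)) * C) / (2 - (x / (C * μ + C / 2 * x)) * C)
      = (2 * (C * μ + C / 2 * x) + C * x) / (2 * C * μ) := by
    rw [div_eq_div_iff]
    · field_simp
      ring
    · have h2 : x / (C * μ + C / 2 * x) * C < 2 := by
        rw [div_mul_eq_mul_div, div_lt_iff₀ hD]
        nlinarith
      linarith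
    · positivity
  rw [hfrac]
  field_simp
  ring

lemma aux_key2 (μ σ C t : ℝ) (hμ : 0 < μ) (hσ : 0 < σ) (hC : 0 < C) (ht : 0 < t) :
    -((σ * t) ^ 2) / (2 * (C * μ + C / 2 * (σ * t)))
      = -t ^ 2 / (2 * (C * μ / σ ^ 2 + C / (2 * σ) * t)) := by
  rw [div_eq_div_iff]
  · field_simp
  · positivity
  · positivity


/-- Right tail concentration bound via a bounded size-bias coupling,
assuming the moment generating function is finite at `2/C`. -/
theorem sizeBias_right_tail {Ω : Type*} [MeasurableSpace Ω] (P : Measure Ω)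
    [IsProbabilityMeasure P] (Y Ys : Ω → ℝ) (μ σ C : ℝ)
    (hμ : 0 < μ) (hσ : 0 < σ) (hC : 0 < C)
    (hYmeas : Measurable Y) (hYsmeas : Measurable Ys)
    (hYnonneg : ∀ ω, 0 ≤ Y ω)
    (hmean : ∫ ω, Y ω ∂P = μ)
    (hvar : ∫ ω, (Y ω - μ) ^ 2 ∂P = σ ^ 2)
    (hsb : ∀ f : ℝ → ℝ, Integrable (fun ω => Y ω * f (Y ω)) P →
      Integrable (fun ω => f (Ys ω)) P →
      ∫ ω, Y ω * f (Y ω) ∂P = μ * ∫ ω, f (Ys ω) ∂P)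
    (hbdd : ∀ᵐ ω ∂P, |Ys ω - Y ω| ≤ C)
    (hmgf : Integrable (fun ω => Real.exp ((2 / C) * Y ω)) P) :
    ∀ t > 0, (P {ω | (Y ω - μ) / σ ≥ t}).toReal ≤
      Real.exp (-t ^ 2 / (2 * (C * μ / σ ^ 2 + (C / (2 * σ)) * t))) := by
  intro t ht
  have hc : (0 : ℝ) < 2 / C := by positivity
  set c : ℝ := 2 / C with hc_def
  -- integrability of exp (s * Y) for s ≤ c
  have hInt : ∀ s : ℝ, s ≤ c → Integrable (fun ω => Real.exp (s * Y ω)) P := by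
    intro s hs
    refine Integrable.mono' ((integrable_const 1).add hmgf)
      ((hYmeas.const_mul s).exp.aestronglyMeasurable)
      (Filter.Eventually.of_forall fun ω => ?_)
    rw [Real.norm_eq_abs, abs_of_nonneg (Real.exp_pos _).le, Pi.add_apply]
    rcases le_or_gt s 0 with h | h
    · have h1 : s * Y ω ≤ 0 := mul_nonpos_of_nonpos_of_nonneg h (hYnonneg ω)
      have h2 : Real.exp (s * Y ω) ≤ 1 := by
        calc Real.exp (s * Y ω) ≤ Real.exp 0 := Real.exp_le_exp.mpr h1
          _ = 1 := Real.exp_zero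
      linarith [Real.exp_pos (c * Y ω)]
    · have h1 : Real.exp (s * Y ω) ≤ Real.exp (c * Y ω) :=
        Real.exp_le_exp.mpr (mul_le_mul_of_nonneg_right hs (hYnonneg ω))
      linarith
  -- integrability of Y * exp (s * Y) for 0 ≤ s < c
  have hIntY : ∀ s : ℝ, s < c → Integrable (fun ω => Y ω * Real.exp (s * Y ω)) P := by
    intro s hsc
    have hδ0 : 0 < c - s := sub_pos.mpr hsc
    refine Integrable.mono' (hmgf.const_mul (1 / (c - s)))
      ((hYmeas.mul (hYmeas.const_mul s).exp).aestronglyMeasurable)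
      (Filter.Eventually.of_forall fun ω => ?_)
    rw [Real.norm_eq_abs, abs_of_nonneg (mul_nonneg (hYnonneg ω) (Real.exp_pos _).le)]
    have h1 : (c - s) * Y ω ≤ Real.exp ((c - s) * Y ω) := by
      linarith [Real.add_one_le_exp ((c - s) * Y ω)]
    have h2 : Real.exp ((c - s) * Y ω) * Real.exp (s * Y ω) = Real.exp (c * Y ω) := by
      rw [← Real.exp_add]; congr 1; ring
    have h3 := Real.exp_pos (s * Y ω)
    have h4 : (c - s) * Y ω * Real.exp (s * Y ω) ≤ Real.exp (c * Y ω) := by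
      calc (c - s) * Y ω * Real.exp (s * Y ω)
          ≤ Real.exp ((c - s) * Y ω) * Real.exp (s * Y ω) :=
            mul_le_mul_of_nonneg_right h1 h3.le
        _ = Real.exp (c * Y ω) := h2
    rw [div_mul_eq_mul_div, one_mul, le_div_iff₀ hδ0]
    nlinarith
  -- a.e. bound Ys ≤ Y + C
  have hYsle : ∀ᵐ ω ∂P, Ys ω ≤ Y ω + C := by
    filter_upwards [hbdd] with ω hω
    have := abs_le.mp hω
    linarith [this.2]
  -- the key size-bias derivative bound
  have hsbApp : ∀ s : ℝ, 0 ≤ s → s < c →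
      (∫ ω, Y ω * Real.exp (s * Y ω) ∂P) ≤
        μ * Real.exp (s * C) * ∫ ω, Real.exp (s * Y ω) ∂P := by
    intro s hs0 hsc
    have hle : ∀ᵐ ω ∂P, Real.exp (s * Ys ω) ≤ Real.exp (s * C) * Real.exp (s * Y ω) := by
      filter_upwards [hYsle] with ω hω
      rw [← Real.exp_add]
      apply Real.exp_le_exp.mpr
      calc s * Ys ω ≤ s * (Y ω + C) := mul_le_mul_of_nonneg_left hω hs0
        _ = s * C + s * Y ω := by ring
    have hIntYs : Integrable (fun ω => Real.exp (s * Ys ω)) P := by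
      refine Integrable.mono' ((hInt s hsc.le).const_mul (Real.exp (s * C)))
        ((hYsmeas.const_mul s).exp.aestronglyMeasurable) ?_
      filter_upwards [hle] with ω hω
      rw [Real.norm_eq_abs, abs_of_nonneg (Real.exp_pos _).le]
      exact hω
    have hid := hsb (fun y => Real.exp (s * y)) (hIntY s hsc) hIntYs
    rw [hid]
    have hbound : ∫ ω, Real.exp (s * Ys ω) ∂P ≤
        Real.exp (s * C) * ∫ ω, Real.exp (s * Y ω) ∂P := by
      rw [← integral_const_mul]
      exact integral_mono_ae hIntYs ((hInt s hsc.le).const_mul _) hle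
    calc μ * ∫ ω, Real.exp (s * Ys ω) ∂P
        ≤ μ * (Real.exp (s * C) * ∫ ω, Real.exp (s * Y ω) ∂P) :=
          mul_le_mul_of_nonneg_left hbound hμ.le
      _ = μ * Real.exp (s * C) * ∫ ω, Real.exp (s * Y ω) ∂P := by ring
  -- differentiation under the integral
  have hMderiv : ∀ s : ℝ, s < c →
      HasDerivAt (fun r => ∫ ω, Real.exp (r * Y ω) ∂P)
        (∫ ω, Y ω * Real.exp (s * Y ω) ∂P) s := by
    intro s hsc
    set m : ℝ := (s + c) / 2 with hm_def
    have hsm : s < m := by simp only [hm_def]; linarith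
    have hmc : m < c := by simp only [hm_def]; linarith
    have hε : 0 < m - s := sub_pos.mpr hsm
    have hres := hasDerivAt_integral_of_dominated_loc_of_deriv_le
      (μ := P) (F := fun r ω => Real.exp (r * Y ω))
      (F' := fun r ω => Y ω * Real.exp (r * Y ω))
      (bound := fun ω => 1 / (c - m) * Real.exp (c * Y ω)) (x₀ := s) (Metric.ball_mem_nhds s hε)
      (Filter.Eventually.of_forall fun x =>
        ((hYmeas.const_mul x).exp.aestronglyMeasurable))
      (hInt s hsc.le)
      ((hYmeas.mul (hYmeas.const_mul s).exp).aestronglyMeasurable)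
      ?_ (hmgf.const_mul _) ?_
    · exact hres.2
    · refine Filter.Eventually.of_forall fun ω => fun x hx => ?_
      show ‖Y ω * Real.exp (x * Y ω)‖ ≤ 1 / (c - m) * Real.exp (c * Y ω)
      rw [Real.norm_eq_abs, abs_of_nonneg (mul_nonneg (hYnonneg ω) (Real.exp_pos _).le)]
      have hxm : x ≤ m := by
        have := abs_lt.mp (Metric.mem_ball.mp hx)
        have h := abs_lt.mp (Metric.mem_ball.mp hx)
        linarith [h.2]
      have hstep : Real.exp (x * Y ω) ≤ Real.exp (m * Y ω) :=
        Real.exp_le_exp.mpr (mul_le_mul_of_nonneg_right hxm (hYnonneg ω))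
      have h1 : (c - m) * Y ω ≤ Real.exp ((c - m) * Y ω) := by
        linarith [Real.add_one_le_exp ((c - m) * Y ω)]
      have h2 : Real.exp ((c - m) * Y ω) * Real.exp (m * Y ω) = Real.exp (c * Y ω) := by
        rw [← Real.exp_add]; congr 1; ring
      have hδ0 : 0 < c - m := sub_pos.mpr hmc
      have h4 : (c - m) * Y ω * Real.exp (m * Y ω) ≤ Real.exp (c * Y ω) := by
        calc (c - m) * Y ω * Real.exp (m * Y ω)
            ≤ Real.exp ((c - m) * Y ω) * Real.exp (m * Y ω) :=
              mul_le_mul_of_nonneg_right h1 (Real.exp_pos _).le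
          _ = Real.exp (c * Y ω) := h2
      rw [div_mul_eq_mul_div, one_mul, le_div_iff₀ hδ0]
      have h5 : Y ω * Real.exp (x * Y ω) ≤ Y ω * Real.exp (m * Y ω) :=
        mul_le_mul_of_nonneg_left hstep (hYnonneg ω)
      nlinarith
    · refine Filter.Eventually.of_forall fun ω => fun x _ => ?_
      have h := (Real.hasDerivAt_exp (x * Y ω)).comp x (hasDerivAt_mul_const (Y ω))
      exact h.congr_deriv (by ring)
  -- notation
  set M : ℝ → ℝ := fun r => ∫ ω, Real.exp (r * Y ω) ∂P with hM_def
  set x : ℝ := σ * t with hx_def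
  have hx : 0 < x := by positivity
  set θ : ℝ := x / (C * μ + C / 2 * x) with hθ_def
  have hden : 0 < C * μ + C / 2 * x := by positivity
  have hθ0 : 0 < θ := by positivity
  have hθc : θ < c := by
    rw [hθ_def, hc_def, div_lt_div_iff₀ hden hC]
    nlinarith
  set E : ℝ → ℝ := fun s => Real.exp (-(μ / C) * (Real.exp (s * C) - 1)) with hE_def
  have hgderiv : ∀ s : ℝ, s < c →
      HasDerivAt (fun r => M r * E r)
        (((∫ ω, Y ω * Real.exp (s * Y ω) ∂P) - μ * Real.exp (s * C) * M s) * E s) s := by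
    intro s hsc
    have h1 : HasDerivAt (fun r : ℝ => Real.exp (r * C)) (Real.exp (s * C) * C) s :=
      (hasDerivAt_mul_const C).exp
    have h2 : HasDerivAt (fun r : ℝ => -(μ / C) * (Real.exp (r * C) - 1))
        (-(μ / C) * (Real.exp (s * C) * C)) s := (h1.sub_const 1).const_mul _
    have h3 : HasDerivAt E (E s * (-(μ / C) * (Real.exp (s * C) * C))) s := by
      have h := (Real.hasDerivAt_exp (-(μ / C) * (Real.exp (s * C) - 1))).comp s h2
      simpa [hE_def, mul_comm, Function.comp_def] using h
    have h4 := (hMderiv s hsc).mul h3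
    exact h4.congr_deriv (by rw [neg_mul, show μ / C * (Real.exp (s * C) * C) = μ * Real.exp (s * C) by field_simp]; ring)
  have hanti : AntitoneOn (fun r => M r * E r) (Set.Icc 0 θ) := by
    apply antitoneOn_of_deriv_nonpos (convex_Icc 0 θ)
    · intro s hs
      exact (hgderiv s (lt_of_le_of_lt hs.2 hθc)).continuousAt.continuousWithinAt
    · intro s hs
      rw [interior_Icc] at hs
      exact (hgderiv s (lt_trans hs.2 hθc)).differentiableAt.differentiableWithinAt
    · intro s hs
      rw [interior_Icc] at hs
      rw [(hgderiv s (lt_trans hs.2 hθc)).deriv]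
      have hEpos : 0 < E s := Real.exp_pos _
      have hD := hsbApp s hs.1.le (lt_trans hs.2 hθc)
      nlinarith
  have hM0 : M 0 = 1 := by
    simp only [hM_def, zero_mul, Real.exp_zero]
    simp
  have hE0 : E 0 = 1 := by
    simp only [hE_def, zero_mul, Real.exp_zero, sub_self, mul_zero]
  have hgθ : M θ * E θ ≤ M 0 * E 0 :=
    hanti (Set.left_mem_Icc.mpr hθ0.le) (Set.right_mem_Icc.mpr hθ0.le) hθ0.le
  have hMθ : M θ ≤ Real.exp ((μ / C) * (Real.exp (θ * C) - 1)) := by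
    rw [hM0, hE0, mul_one] at hgθ
    have h1 : E θ * Real.exp ((μ / C) * (Real.exp (θ * C) - 1)) = 1 := by
      rw [hE_def, ← Real.exp_add]
      ring_nf
      exact Real.exp_zero
    nlinarith [Real.exp_pos ((μ / C) * (Real.exp (θ * C) - 1)), Real.exp_pos
      (-(μ / C) * (Real.exp (θ * C) - 1)), hgθ]
  -- Chernoff
  have hset : {ω | (Y ω - μ) / σ ≥ t} = {ω | μ + x ≤ Y ω} := by
    ext ω
    simp only [Set.mem_setOf_eq, ge_iff_le, le_div_iff₀ hσ, hx_def]
    constructor <;> intro h <;> nlinarith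
  have hch := measure_ge_le_exp_mul_mgf (X := Y) (μ := P) (μ + x) hθ0.le (hInt θ hθc.le)
  have hmgfM : mgf Y P θ = M θ := rfl
  -- arithmetic
  have hu0 : (0:ℝ) ≤ θ * C := by positivity
  have hu2 : θ * C < 2 := by
    rw [hθ_def, div_mul_eq_mul_div, div_lt_iff₀ hden]
    nlinarith
  have hexp_bd : Real.exp (θ * C) ≤ (2 + θ * C) / (2 - θ * C) := by
    rw [le_div_iff₀ (by linarith : (0:ℝ) < 2 - θ * C)]
    linarith [aux_two_sub_mul_exp_le (θ * C) hu0,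
      mul_comm (Real.exp (θ * C)) (2 - θ * C)]
  have hkey : -θ * (μ + x) + (μ / C) * ((2 + θ * C) / (2 - θ * C) - 1)
      = -t ^ 2 / (2 * (C * μ / σ ^ 2 + C / (2 * σ) * t)) := by
    rw [hθ_def, aux_key μ C x hμ hC hx, hx_def]
    exact aux_key2 μ σ C t hμ hσ hC ht
  rw [hset]
  calc (P {ω | μ + x ≤ Y ω}).toReal
      ≤ Real.exp (-θ * (μ + x)) * mgf Y P θ := hch
    _ ≤ Real.exp (-θ * (μ + x)) * Real.exp ((μ / C) * (Real.exp (θ * C) - 1)) := by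
        rw [hmgfM]
        exact mul_le_mul_of_nonneg_left hMθ (Real.exp_pos _).le
    _ = Real.exp (-θ * (μ + x) + (μ / C) * (Real.exp (θ * C) - 1)) := (Real.exp_add _ _).symm
    _ ≤ Real.exp (-t ^ 2 / (2 * (C * μ / σ ^ 2 + C / (2 * σ) * t))) := by
        apply Real.exp_le_exp.mpr
        rw [← hkey]
        have hmono : (μ / C) * (Real.exp (θ * C) - 1)
            ≤ (μ / C) * ((2 + θ * C) / (2 - θ * C) - 1) := by
          apply mul_le_mul_of_nonneg_left _ (by positivity)
          linarith
        linarith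
end

section
/- Suppose Y ≥ 0 has mean μ ∈ (0,∞), that Y^s has the Y size-biased distribution coupled on the same space with |Y^s - Y| ≤ C a.s., and that m(θ) = E[e^{θY}] < ∞ for 0 < θ < 2/C. Then for all 0 < θ < 2/C, E[e^{θ Y^s}] ≤ ((1 + Cθ/2)/(1 - Cθ/2)) E[e^{θY}]. -/
open MeasureTheory

private lemma aux_one_sub_le (t : ℝ) (ht : 0 ≤ t) :
    1 - t ≤ (1 + t) * Real.exp (-(2 * t)) := by
  set g : ℝ → ℝ := fun t => (1 + t) * Real.exp (-(2 * t)) - (1 - t) with hg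
  have hd : ∀ s : ℝ, HasDerivAt g (1 - (1 + 2 * s) * Real.exp (-(2 * s))) s := by
    intro s
    have h1 : HasDerivAt (fun s : ℝ => -(2 * s)) (-2) s := by
      have := ((hasDerivAt_id' s).const_mul (2 : ℝ)).neg; rwa [mul_one] at this
    have h2 : HasDerivAt (fun s : ℝ => Real.exp (-(2 * s)))
        (Real.exp (-(2 * s)) * (-2)) s := (Real.hasDerivAt_exp _).comp s h1
    have h3 : HasDerivAt (fun s : ℝ => (1 + s)) 1 s := by
      simpa using (hasDerivAt_id s).const_add (1 : ℝ)
    have h4 : HasDerivAt (fun s : ℝ => (1 + s) * Real.exp (-(2 * s)))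
        (1 * Real.exp (-(2 * s)) + (1 + s) * (Real.exp (-(2 * s)) * (-2))) s :=
      h3.mul h2
    have h5 : HasDerivAt (fun s : ℝ => (1 - s)) (-1) s := by
      have := (hasDerivAt_const s (1:ℝ)).sub (hasDerivAt_id' s); rwa [zero_sub] at this
    have := h4.sub h5
    simp only [Pi.sub_def] at this
    exact this.congr_deriv (by ring)
  have hmono : MonotoneOn g (Set.Ici (0 : ℝ)) := by
    apply monotoneOn_of_deriv_nonneg (convex_Ici 0)
    · exact (Continuous.continuousOn (by
        have : Continuous g := by
          apply Continuous.sub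
          · exact (continuous_const.add continuous_id).mul
              (Real.continuous_exp.comp (continuous_const.mul continuous_id).neg)
          · exact continuous_const.sub continuous_id
        exact this))
    · intro s _
      exact (hd s).differentiableAt.differentiableWithinAt
    · intro s hs
      rw [interior_Ici] at hs
      rw [(hd s).deriv]
      have hs0 : (0:ℝ) < s := hs
      have h1 : 1 + 2 * s ≤ Real.exp (2 * s) := by
        simpa [add_comm] using Real.add_one_le_exp (2 * s)
      have h2 : (1 + 2 * s) * Real.exp (-(2 * s)) ≤ 1 := by
        rw [Real.exp_neg]
        rw [mul_inv_le_iff₀ (Real.exp_pos _)]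
        simpa using h1
      linarith
  have h0 : g 0 = 0 := by simp [hg]
  have := hmono (Set.self_mem_Ici) (Set.mem_Ici.2 ht) ht
  rw [h0] at this
  simp only [hg] at this
  linarith

private lemma exp_le_ratio (x : ℝ) (hx0 : 0 ≤ x) (hx2 : x < 2) :
    Real.exp x ≤ (1 + x / 2) / (1 - x / 2) := by
  have hpos : 0 < 1 - x / 2 := by linarith
  rw [le_div_iff₀ hpos]
  have := aux_one_sub_le (x / 2) (by linarith)
  have hx : -(2 * (x / 2)) = -x := by ring
  rw [hx] at this
  have hexp := Real.exp_pos x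
  have : (1 - x / 2) * Real.exp x ≤ (1 + x / 2) * (Real.exp (-x) * Real.exp x) := by
    have h := mul_le_mul_of_nonneg_right this (le_of_lt hexp)
    calc (1 - x / 2) * Real.exp x ≤ ((1 + x / 2) * Real.exp (-x)) * Real.exp x := h
      _ = (1 + x / 2) * (Real.exp (-x) * Real.exp x) := by ring
  rw [← Real.exp_add, neg_add_cancel, Real.exp_zero, mul_one] at this
  linarith

/-- Bound on the moment generating function of the size-biased variable
for `0 < θ < 2/C` under a bounded size-bias coupling. -/
theorem sizeBias_mgf_upper {Ω : Type*} [MeasurableSpace Ω] (P : Measure Ω)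
    [IsProbabilityMeasure P] (Y Ys : Ω → ℝ) (μ C : ℝ)
    (hμ : 0 < μ) (hC : 0 < C)
    (hYmeas : Measurable Y) (hYsmeas : Measurable Ys)
    (hYnonneg : ∀ ω, 0 ≤ Y ω)
    (hmean : ∫ ω, Y ω ∂P = μ)
    (hsb : ∀ f : ℝ → ℝ, Integrable (fun ω => Y ω * f (Y ω)) P →
      Integrable (fun ω => f (Ys ω)) P →
      ∫ ω, Y ω * f (Y ω) ∂P = μ * ∫ ω, f (Ys ω) ∂P)
    (hbdd : ∀ᵐ ω ∂P, |Ys ω - Y ω| ≤ C)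
    (hmgf : ∀ θ : ℝ, 0 < θ → θ < 2 / C →
      Integrable (fun ω => Real.exp (θ * Y ω)) P) :
    ∀ θ : ℝ, 0 < θ → θ < 2 / C →
      ∫ ω, Real.exp (θ * Ys ω) ∂P ≤
        ((1 + C * θ / 2) / (1 - C * θ / 2)) * ∫ ω, Real.exp (θ * Y ω) ∂P := by
  intro θ hθ0 hθ2
  have hCθ : C * θ < 2 := by
    rw [lt_div_iff₀ hC] at hθ2; linarith
  have hInt : Integrable (fun ω => Real.exp (θ * Y ω)) P := hmgf θ hθ0 hθ2
  have hIntG : Integrable (fun ω => Real.exp (θ * C) * Real.exp (θ * Y ω)) P :=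
    hInt.const_mul _
  -- pointwise a.e. bound
  have hae : ∀ᵐ ω ∂P, Real.exp (θ * Ys ω) ≤ Real.exp (θ * C) * Real.exp (θ * Y ω) := by
    filter_upwards [hbdd] with ω hω
    rw [← Real.exp_add]
    apply Real.exp_le_exp.2
    have h1 : Ys ω - Y ω ≤ C := le_trans (le_abs_self _) hω
    nlinarith
  have hIntYs : Integrable (fun ω => Real.exp (θ * Ys ω)) P := by
    apply hIntG.mono' ((Real.measurable_exp.comp (hYsmeas.const_mul θ)).aestronglyMeasurable)
    filter_upwards [hae] with ω hω
    simp only [Function.comp_apply, Real.norm_eq_abs, abs_of_pos (Real.exp_pos _)]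
    exact hω
  have hstep1 : ∫ ω, Real.exp (θ * Ys ω) ∂P ≤ ∫ ω, Real.exp (θ * C) * Real.exp (θ * Y ω) ∂P :=
    integral_mono_ae hIntYs hIntG hae
  rw [integral_const_mul] at hstep1
  have hratio : Real.exp (θ * C) ≤ (1 + C * θ / 2) / (1 - C * θ / 2) := by
    have := exp_le_ratio (C * θ) (by positivity) hCθ
    rwa [mul_comm θ C]
  have hIpos : 0 ≤ ∫ ω, Real.exp (θ * Y ω) ∂P :=
    integral_nonneg fun ω => (Real.exp_pos _).le
  calc ∫ ω, Real.exp (θ * Ys ω) ∂P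
      ≤ Real.exp (θ * C) * ∫ ω, Real.exp (θ * Y ω) ∂P := hstep1
    _ ≤ ((1 + C * θ / 2) / (1 - C * θ / 2)) * ∫ ω, Real.exp (θ * Y ω) ∂P :=
        mul_le_mul_of_nonneg_right hratio hIpos
end

section
/- Let {C_g : g ∈ 𝒱} be independent random variables, and for each α ∈ 𝒱 let 𝒱_α ⊆ 𝒱 and let X_α = X_α(C_g, g ∈ 𝒱_α) be nonnegative with finite nonzero mean. Let {C_g^α : g ∈ 𝒱_α} be independent of {C_g} with distribution dF^α(c) = X_α(c) dF(c)/E X_α, and set X_β^α = X_β(C_g^α for g ∈ 𝒱_β ∩ 𝒱_α, C_g for g ∈ 𝒱_β \ 𝒱_α). Then X^α = {X_β^α : β ∈ 𝒱} has the X distribution size-biased in coordinate α. Moreover, if X_α ≤ M for all α, then with I chosen proportional to E X_α independently of everything else, Y^s = Σ_β X_β^I has the Y = Σ_β X_β size-biased distribution and |Y^s - Y| ≤ bM, where b = max_α |{β : 𝒱_β ∩ 𝒱_α ≠ ∅}|. -/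
open MeasureTheory ProbabilityTheory

/-- Size biasing a sum of functions of independent random variables: biasing the
underlying variables in the neighborhood `𝒱_α` produces the distribution size-biased
in coordinate `α`; mixing over a proportionally chosen index `I` produces a size-biased
version `Y^s` of `Y` with `|Y^s - Y| ≤ bM`. -/
theorem sizeBias_local_dependence {Ω : Type*} [MeasurableSpace Ω] (P : Measure Ω)
    [IsProbabilityMeasure P] {V : Type*} [Fintype V] [DecidableEq V]
    [MeasurableSpace V] [MeasurableSingletonClass V]
    (C : V → Ω → ℝ) (hCmeas : ∀ g, Measurable (C g))
    (hCindep : iIndepFun C P)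
    (Vnbd : V → Finset V)
    (Xfun : V → (V → ℝ) → ℝ) (hXfmeas : ∀ α, Measurable (Xfun α))
    (hXloc : ∀ α (c c' : V → ℝ), (∀ g ∈ Vnbd α, c g = c' g) → Xfun α c = Xfun α c')
    (hXnonneg : ∀ α c, 0 ≤ Xfun α c)
    (EX : V → ℝ) (hEXpos : ∀ α, 0 < EX α)
    (hEX : ∀ α, ∫ ω, Xfun α (fun g => C g ω) ∂P = EX α)
    (Cs : V → V → Ω → ℝ) (hCsmeas : ∀ α g, Measurable (Cs α g))
    (hCslaw : ∀ α, Measure.map (fun ω => (fun g => Cs α g ω)) P =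
      (Measure.map (fun ω => (fun g => C g ω)) P).withDensity
        (fun c => ENNReal.ofReal (Xfun α c / EX α)))
    (hCsindep : ∀ α, IndepFun (fun ω => (fun g => Cs α g ω))
      (fun ω => (fun g => C g ω)) P)
    -- the coordinatewise size biased vectors
    (Xb : V → V → Ω → ℝ)
    (hXb : ∀ α β ω, Xb α β ω =
      Xfun β (fun g => if g ∈ Vnbd α then Cs α g ω else C g ω))
    -- the random index chosen proportional to the means
    (I : Ω → V) (hImeas : Measurable I) (μ : ℝ) (hμ : μ = ∑ α, EX α)
    (hIlaw : ∀ α, (P {ω | I ω = α}).toReal = EX α / μ)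
    (hIindep : IndepFun I
      (fun ω => ((fun g => C g ω), (fun p : V × V => Cs p.1 p.2 ω))) P)
    (M : ℝ) (hM : ∀ α c, Xfun α c ≤ M)
    (Y Ys : Ω → ℝ)
    (hY : ∀ ω, Y ω = ∑ β, Xfun β (fun g => C g ω))
    (hYs : ∀ ω, Ys ω = ∑ β, Xb (I ω) β ω)
    (b : ℕ)
    (hb : b = Finset.univ.sup
      (fun α => (Finset.univ.filter (fun β => (Vnbd β ∩ Vnbd α).Nonempty)).card)) :
    -- X^α has the X distribution size-biased in coordinate α
    (∀ α, ∀ f : (V → ℝ) → ℝ, Measurable f →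
      Integrable (fun ω => Xfun α (fun g => C g ω) * f (fun β => Xfun β (fun g => C g ω))) P →
      Integrable (fun ω => f (fun β => Xb α β ω)) P →
      ∫ ω, Xfun α (fun g => C g ω) * f (fun β => Xfun β (fun g => C g ω)) ∂P =
        EX α * ∫ ω, f (fun β => Xb α β ω) ∂P) ∧
    -- Y^s has the Y size-biased distribution
    (∀ g : ℝ → ℝ, Measurable g →
      Integrable (fun ω => Y ω * g (Y ω)) P →
      Integrable (fun ω => g (Ys ω)) P →
      ∫ ω, Y ω * g (Y ω) ∂P = μ * ∫ ω, g (Ys ω) ∂P) ∧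
    -- the coupling is bounded by bM
    (∀ ω, |Ys ω - Y ω| ≤ b * M) := by
  classical
  -- nonemptiness and positivity facts
  have hΩne : Nonempty Ω := by
    by_contra h
    have h1 : (Set.univ : Set Ω) = ∅ := Set.univ_eq_empty_iff.mpr (not_nonempty_iff.mp h)
    have h2 := measure_univ (μ := P)
    rw [h1, measure_empty] at h2
    exact zero_ne_one h2
  have hVne : Nonempty V := ⟨I hΩne.some⟩
  have hμpos : 0 < μ := by
    rw [hμ]; exact Finset.sum_pos (fun α _ => hEXpos α) Finset.univ_nonempty
  have hM0 : 0 ≤ M := le_trans (hXnonneg hVne.some (fun _ => 0)) (hM _ _)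
  -- the vector of the underlying variables and its law
  set Cvec : Ω → (V → ℝ) := fun ω g => C g ω with hCvecdef
  have hCvecMeas : Measurable Cvec := measurable_pi_lambda _ hCmeas
  set ν : Measure (V → ℝ) := Measure.map Cvec P with hνdef
  have hνprob : IsProbabilityMeasure ν := Measure.isProbabilityMeasure_map hCvecMeas.aemeasurable
  set μm : V → Measure ℝ := fun g => Measure.map (C g) P with hμmdef
  have hμmprob : ∀ g, IsProbabilityMeasure (μm g) := fun g =>
    Measure.isProbabilityMeasure_map (hCmeas g).aemeasurable
  -- independence: the law of the vector is the product of the marginals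
  have hνpi : Measure.pi μm = ν := by
    refine Measure.pi_eq fun s hs => ?_
    rw [hνdef, Measure.map_apply hCvecMeas (MeasurableSet.univ_pi hs)]
    have hpre : Cvec ⁻¹' Set.pi Set.univ s = ⋂ g ∈ (Finset.univ : Finset V), C g ⁻¹' s g := by
      ext ω
      simp [Set.mem_pi, Cvec]
    rw [hpre, hCindep.measure_inter_preimage_eq_mul Finset.univ (fun g _ => hs g)]
    exact Finset.prod_congr rfl fun g _ => (Measure.map_apply (hCmeas g) (hs g)).symm
  -- measure of a partial box
  have hνbox : ∀ (T : Finset V) (s : V → Set ℝ), (∀ g, MeasurableSet (s g)) →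
      ν (Set.pi ↑T s) = ∏ g ∈ T, μm g (s g) := by
    intro T s hs
    rw [← hνpi]
    have hbox : (Set.pi ↑T s) = Set.pi Set.univ (fun g => if g ∈ T then s g else Set.univ) := by
      ext c
      simp only [Set.mem_pi, Set.mem_univ, true_implies, Finset.mem_coe]
      constructor
      · intro h g
        split_ifs with hg
        · exact h g hg
        · trivial
      · intro h g hg
        have := h g; rwa [if_pos hg] at this
    rw [hbox, Measure.pi_pi]
    calc ∏ g, μm g (if g ∈ T then s g else Set.univ)
        = ∏ g, (if g ∈ T then μm g (s g) else 1) := by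
          refine Finset.prod_congr rfl fun g _ => ?_
          split_ifs with hg
          · rfl
          · exact measure_univ
      _ = ∏ g ∈ Finset.univ ∩ T, μm g (s g) := Finset.prod_ite_mem _ _ _
      _ = ∏ g ∈ T, μm g (s g) := by rw [Finset.univ_inter]
  -- the mixing map and its law
  have hmixMeas : ∀ α, Measurable
      (fun p : (V → ℝ) × (V → ℝ) => fun g => if g ∈ Vnbd α then p.1 g else p.2 g) := by
    intro α
    refine measurable_pi_lambda _ fun g => ?_
    by_cases hg : g ∈ Vnbd α <;> simp only [hg, if_true, if_false]
    · exact (measurable_pi_apply g).comp measurable_fst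
    · exact (measurable_pi_apply g).comp measurable_snd
  have hmixLaw : ∀ α, Measure.map
      (fun p : (V → ℝ) × (V → ℝ) => fun g => if g ∈ Vnbd α then p.1 g else p.2 g)
      (ν.prod ν) = ν := by
    intro α
    have hpi : Measure.pi μm = Measure.map
        (fun p : (V → ℝ) × (V → ℝ) => fun g => if g ∈ Vnbd α then p.1 g else p.2 g)
        (ν.prod ν) := by
      refine Measure.pi_eq fun s hs => ?_
      rw [Measure.map_apply (hmixMeas α) (MeasurableSet.univ_pi hs)]
      have hpre : (fun p : (V → ℝ) × (V → ℝ) => fun g => if g ∈ Vnbd α then p.1 g else p.2 g)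
          ⁻¹' Set.pi Set.univ s
          = (Set.pi ↑(Vnbd α) s) ×ˢ (Set.pi (↑(Vnbd α))ᶜ s) := by
        ext p
        simp only [Set.mem_preimage, Set.mem_pi, Set.mem_univ, true_implies, Set.mem_prod,
          Finset.mem_coe, Set.mem_compl_iff]
        constructor
        · intro h
          refine ⟨fun g hg => ?_, fun g hg => ?_⟩
          · have := h g; rwa [if_pos hg] at this
          · have := h g; rwa [if_neg hg] at this
        · intro h g
          by_cases hg : g ∈ Vnbd α
          · rw [if_pos hg]; exact h.1 g hg
          · rw [if_neg hg]; exact h.2 g hg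
      rw [hpre, Measure.prod_prod, hνbox (Vnbd α) s hs, ← Finset.coe_compl,
        hνbox ((Vnbd α)ᶜ) s hs]
      exact Finset.prod_mul_prod_compl (Vnbd α) _
    exact hpi.symm.trans hνpi
  -- Part 1 : coordinatewise size biasing
  have part1 : ∀ α, ∀ f : (V → ℝ) → ℝ, Measurable f →
      Integrable (fun ω => Xfun α (fun g => C g ω) * f (fun β => Xfun β (fun g => C g ω))) P →
      Integrable (fun ω => f (fun β => Xb α β ω)) P →
      ∫ ω, Xfun α (fun g => C g ω) * f (fun β => Xfun β (fun g => C g ω)) ∂P =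
        EX α * ∫ ω, f (fun β => Xb α β ω) ∂P := by
    intro α f hf hInt1 hInt2
    set mix : (V → ℝ) × (V → ℝ) → (V → ℝ) :=
      fun p g => if g ∈ Vnbd α then p.1 g else p.2 g with hmixdef
    set Csvec : Ω → (V → ℝ) := fun ω g => Cs α g ω with hCsvecdef
    have hCsvecMeas : Measurable Csvec := measurable_pi_lambda _ (hCsmeas α)
    set ν' : Measure (V → ℝ) := Measure.map Csvec P with hν'def
    have hν'd : ν' = ν.withDensity (fun c => ENNReal.ofReal (Xfun α c / EX α)) := hCslaw α
    set Φ : (V → ℝ) × (V → ℝ) → ℝ := fun p => f (fun β => Xfun β (mix p)) with hΦdef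
    have hΦmeas : Measurable Φ :=
      hf.comp (measurable_pi_lambda _ fun β => (hXfmeas β).comp (hmixMeas α))
    set G : (V → ℝ) → ℝ := fun c => Xfun α c * f (fun β => Xfun β c) with hGdef
    have hGmeas : Measurable G :=
      (hXfmeas α).mul (hf.comp (measurable_pi_lambda _ fun β => hXfmeas β))
    have hpairMeas : Measurable (fun ω => (Csvec ω, Cvec ω)) := hCsvecMeas.prodMk hCvecMeas
    have hpairLaw : Measure.map (fun ω => (Csvec ω, Cvec ω)) P = ν'.prod ν :=
      (indepFun_iff_map_prod_eq_prod_map_map hCsvecMeas.aemeasurable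
        hCvecMeas.aemeasurable).mp (hCsindep α)
    have hcomp : (fun ω => f (fun β => Xb α β ω)) = fun ω => Φ (Csvec ω, Cvec ω) := by
      funext ω
      simp only [hΦdef]
      congr 1
      funext β
      rw [hXb]
    have hIntΦ : Integrable Φ (ν'.prod ν) := by
      rw [← hpairLaw,
        integrable_map_measure hΦmeas.aestronglyMeasurable hpairMeas.aemeasurable]
      have h2 := hInt2
      rw [hcomp] at h2
      exact h2
    have hIntG : Integrable G ν := by
      rw [hνdef, integrable_map_measure hGmeas.aestronglyMeasurable hCvecMeas.aemeasurable]
      exact hInt1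
    have hIntGmix : Integrable (fun p => G (mix p)) (ν.prod ν) := by
      have hm := hmixLaw α
      rw [← hm] at hIntG
      exact (integrable_map_measure hGmeas.aestronglyMeasurable
        (hmixMeas α).aemeasurable).mp hIntG
    -- left-hand side as a double integral
    have hL : ∫ ω, Xfun α (fun g => C g ω) * f (fun β => Xfun β (fun g => C g ω)) ∂P
        = ∫ c', Xfun α c' * ∫ c, Φ (c', c) ∂ν ∂ν := by
      calc ∫ ω, Xfun α (fun g => C g ω) * f (fun β => Xfun β (fun g => C g ω)) ∂P
          = ∫ c, G c ∂ν := (integral_map hCvecMeas.aemeasurable hGmeas.aestronglyMeasurable).symm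
        _ = ∫ p, G (mix p) ∂(ν.prod ν) := by
            conv_lhs => rw [← hmixLaw α]
            exact integral_map (hmixMeas α).aemeasurable hGmeas.aestronglyMeasurable
        _ = ∫ c', ∫ c, G (mix (c', c)) ∂ν ∂ν := integral_prod _ hIntGmix
        _ = ∫ c', Xfun α c' * ∫ c, Φ (c', c) ∂ν ∂ν := by
            refine integral_congr_ae (Filter.Eventually.of_forall fun c' => ?_)
            show ∫ c, G (mix (c', c)) ∂ν = Xfun α c' * ∫ c, Φ (c', c) ∂ν
            have hGmix : (fun c => G (mix (c', c))) = fun c => Xfun α c' * Φ (c', c) := by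
              funext c
              simp only [hGdef, hΦdef]
              congr 1
              exact hXloc α (mix (c', c)) c' fun g hg => by
                simp only [hmixdef]; rw [if_pos hg]
            rw [hGmix, integral_const_mul]
    -- right-hand side as a double integral
    have hR : ∫ ω, f (fun β => Xb α β ω) ∂P
        = ∫ c', (Xfun α c' / EX α) * ∫ c, Φ (c', c) ∂ν ∂ν := by
      calc ∫ ω, f (fun β => Xb α β ω) ∂P
          = ∫ ω, Φ (Csvec ω, Cvec ω) ∂P := by rw [hcomp]
        _ = ∫ p, Φ p ∂(ν'.prod ν) := by
            rw [← hpairLaw, integral_map hpairMeas.aemeasurable hΦmeas.aestronglyMeasurable]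
        _ = ∫ c', ∫ c, Φ (c', c) ∂ν ∂ν' := integral_prod _ hIntΦ
        _ = ∫ c', (Xfun α c' / EX α).toNNReal • ∫ c, Φ (c', c) ∂ν ∂ν := by
            rw [hν'd]
            exact integral_withDensity_eq_integral_smul
              (measurable_real_toNNReal.comp ((hXfmeas α).div_const (EX α))) _
        _ = ∫ c', (Xfun α c' / EX α) * ∫ c, Φ (c', c) ∂ν ∂ν := by
            refine integral_congr_ae (Filter.Eventually.of_forall fun c' => ?_)
            show (Xfun α c' / EX α).toNNReal • ∫ c, Φ (c', c) ∂ν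
              = (Xfun α c' / EX α) * ∫ c, Φ (c', c) ∂ν
            rw [NNReal.smul_def, Real.coe_toNNReal _ (div_nonneg (hXnonneg α c') (hEXpos α).le),
              smul_eq_mul]
    have hne : EX α ≠ 0 := (hEXpos α).ne'
    calc ∫ ω, Xfun α (fun g => C g ω) * f (fun β => Xfun β (fun g => C g ω)) ∂P
        = ∫ c', Xfun α c' * ∫ c, Φ (c', c) ∂ν ∂ν := hL
      _ = ∫ c', EX α * ((Xfun α c' / EX α) * ∫ c, Φ (c', c) ∂ν) ∂ν := by
          refine integral_congr_ae (Filter.Eventually.of_forall fun c' => ?_)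
          show Xfun α c' * ∫ c, Φ (c', c) ∂ν
            = EX α * ((Xfun α c' / EX α) * ∫ c, Φ (c', c) ∂ν)
          field_simp
      _ = EX α * ∫ c', (Xfun α c' / EX α) * ∫ c, Φ (c', c) ∂ν ∂ν := integral_const_mul _ _
      _ = EX α * ∫ ω, f (fun β => Xb α β ω) ∂P := by rw [← hR]
  refine ⟨part1, ?_, ?_⟩
  · -- Part 2 : the mixture is a size-biased version of Y
    intro g hg hint1 hint2
    set W : Ω → (V → ℝ) × (V × V → ℝ) := fun ω => (Cvec ω, fun p => Cs p.1 p.2 ω) with hWdef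
    have hWmeas : Measurable W :=
      hCvecMeas.prodMk (measurable_pi_lambda _ fun p => hCsmeas p.1 p.2)
    set ψ : V → ((V → ℝ) × (V × V → ℝ)) → ℝ := fun α q =>
      g (∑ β, Xfun β (fun g' => if g' ∈ Vnbd α then q.2 (α, g') else q.1 g')) with hψdef
    have hψmeas : ∀ α, Measurable (ψ α) := by
      intro α
      refine hg.comp (Finset.measurable_sum _ fun β _ => (hXfmeas β).comp
        (measurable_pi_lambda _ fun g' => ?_))
      by_cases h : g' ∈ Vnbd α <;> simp only [h, if_true, if_false]
      · exact (measurable_pi_apply _).comp measurable_snd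
      · exact (measurable_pi_apply _).comp measurable_fst
    have hψW : ∀ α ω, ψ α (W ω) = g (∑ β, Xb α β ω) := by
      intro α ω
      simp only [hψdef, hWdef]
      congr 1
      exact Finset.sum_congr rfl fun β _ => (hXb α β ω).symm
    have hYmeas : Measurable Y := by
      have hYeq : Y = fun ω => ∑ β, Xfun β (fun g => C g ω) := funext hY
      rw [hYeq]
      exact Finset.measurable_sum _ fun β _ => (hXfmeas β).comp hCvecMeas
    have hsetmeas : ∀ α, MeasurableSet {ω | I ω = α} := fun α =>
      hImeas (measurableSet_singleton α)
    have hPαpos : ∀ α, P {ω | I ω = α} ≠ 0 := by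
      intro α h0
      have hl := hIlaw α
      rw [h0] at hl
      simp only [ENNReal.toReal_zero] at hl
      exact absurd hl.symm (ne_of_gt (div_pos (hEXpos α) hμpos))
    -- integrability of each biased sum
    have hIntψ : ∀ α, Integrable (fun ω => ψ α (W ω)) P := by
      intro α
      have hindE : IndepFun (fun ω => if I ω = α then (1 : ENNReal) else 0)
          (fun ω => ENNReal.ofReal |ψ α (W ω)|) P :=
        hIindep.comp (φ := fun v => if v = α then (1 : ENNReal) else 0)
          (ψ := fun q => ENNReal.ofReal |ψ α q|) (measurable_of_countable _)
          (ENNReal.measurable_ofReal.comp (hψmeas α).abs)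
      have hf1 : Measurable (fun ω => if I ω = α then (1 : ENNReal) else 0) :=
        (measurable_of_countable (fun v : V => if v = α then (1 : ENNReal) else 0)).comp hImeas
      have hg1 : Measurable (fun ω => ENNReal.ofReal |ψ α (W ω)|) :=
        ENNReal.measurable_ofReal.comp (((hψmeas α).comp hWmeas).abs)
      have hkey := lintegral_mul_eq_lintegral_mul_lintegral_of_indepFun hf1 hg1 hindE
      have hχ : ∫⁻ ω, (if I ω = α then (1 : ENNReal) else 0) ∂P = P {ω | I ω = α} := by
        have hind : (fun ω => if I ω = α then (1 : ENNReal) else 0)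
            = Set.indicator {ω | I ω = α} (1 : Ω → ENNReal) := by
          funext ω
          by_cases h : I ω = α <;>
            simp [Set.indicator_apply, Set.mem_setOf_eq, h]
        rw [hind]
        exact lintegral_indicator_one (hsetmeas α)
      have hbound : ∫⁻ ω, ((fun ω => if I ω = α then (1 : ENNReal) else 0) *
          fun ω => ENNReal.ofReal |ψ α (W ω)|) ω ∂P
          ≤ ∫⁻ ω, ENNReal.ofReal |g (Ys ω)| ∂P := by
        refine lintegral_mono fun ω => ?_
        simp only [Pi.mul_apply]
        by_cases hω : I ω = α
        · rw [if_pos hω, one_mul, hψW α ω, hYs ω, hω]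
        · rw [if_neg hω, zero_mul]
          exact zero_le
      have hfin : ∫⁻ ω, ENNReal.ofReal |g (Ys ω)| ∂P < ⊤ := by
        have h2 := hint2.hasFiniteIntegral
        rw [hasFiniteIntegral_iff_norm] at h2
        simpa [Real.norm_eq_abs] using h2
      have hmulfin : P {ω | I ω = α} * ∫⁻ ω, ENNReal.ofReal |ψ α (W ω)| ∂P < ⊤ := by
        rw [← hχ, ← hkey]
        exact lt_of_le_of_lt hbound hfin
      have hψfin : ∫⁻ ω, ENNReal.ofReal |ψ α (W ω)| ∂P < ⊤ := by
        by_contra htop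
        rw [not_lt, top_le_iff] at htop
        rw [htop, ENNReal.mul_top (hPαpos α)] at hmulfin
        exact absurd hmulfin (lt_irrefl _)
      refine ⟨((hψmeas α).comp hWmeas).aestronglyMeasurable, ?_⟩
      rw [hasFiniteIntegral_iff_norm]
      simpa [Real.norm_eq_abs] using hψfin
    -- decomposition of g (Ys)
    have hgYs : ∀ ω, g (Ys ω) = ∑ α, (if I ω = α then (1:ℝ) else 0) * ψ α (W ω) := by
      intro ω
      have h1 : ∀ α : V, (if I ω = α then (1:ℝ) else 0) * ψ α (W ω)
          = if I ω = α then ψ α (W ω) else 0 := fun α => by split_ifs <;> simp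
      calc g (Ys ω) = ψ (I ω) (W ω) := by rw [hψW, hYs]
        _ = ∑ α, if I ω = α then ψ α (W ω) else 0 := by
            rw [Finset.sum_ite_eq]
            simp
        _ = ∑ α, (if I ω = α then (1:ℝ) else 0) * ψ α (W ω) :=
            Finset.sum_congr rfl fun α _ => (h1 α).symm
    have hχind : ∀ α : V, (fun ω => if I ω = α then (1:ℝ) else 0)
        = Set.indicator {ω | I ω = α} (fun _ => 1) := by
      intro α
      funext ω
      rw [Set.indicator_apply]
      rfl
    have hχint : ∀ α, Integrable (fun ω => if I ω = α then (1:ℝ) else 0) P := by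
      intro α
      rw [hχind α]
      exact (integrable_const 1).indicator (hsetmeas α)
    have hindR : ∀ α, IndepFun (fun ω => if I ω = α then (1:ℝ) else 0)
        (fun ω => ψ α (W ω)) P :=
      fun α => hIindep.comp (φ := fun v : V => if v = α then (1:ℝ) else 0)
        (measurable_of_countable _) (hψmeas α)
    have hprodint : ∀ α, Integrable (fun ω => (if I ω = α then (1:ℝ) else 0) * ψ α (W ω)) P :=
      fun α => (hindR α).integrable_mul (hχint α) (hIntψ α)
    have hχval : ∀ α, ∫ ω, (if I ω = α then (1:ℝ) else 0) ∂P = EX α / μ := by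
      intro α
      rw [hχind α, integral_indicator_const (1:ℝ) (hsetmeas α), smul_eq_mul, mul_one, measureReal_def, hIlaw]
    have hsplit : ∫ ω, g (Ys ω) ∂P = ∑ α, (EX α / μ) * ∫ ω, ψ α (W ω) ∂P := by
      calc ∫ ω, g (Ys ω) ∂P
          = ∫ ω, ∑ α, (if I ω = α then (1:ℝ) else 0) * ψ α (W ω) ∂P :=
            integral_congr_ae (Filter.Eventually.of_forall fun ω => hgYs ω)
        _ = ∑ α, ∫ ω, (if I ω = α then (1:ℝ) else 0) * ψ α (W ω) ∂P :=
            integral_finset_sum _ fun α _ => hprodint α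
        _ = ∑ α, (EX α / μ) * ∫ ω, ψ α (W ω) ∂P := by
            refine Finset.sum_congr rfl fun α _ => ?_
            rw [← hχval α]
            exact (hindR α).integral_fun_mul_eq_mul_integral (hχint α).aestronglyMeasurable (hIntψ α).aestronglyMeasurable
    -- integrability of X_α g(Y)
    have hXY : ∀ α, Integrable (fun ω => Xfun α (fun g' => C g' ω) * g (Y ω)) P := by
      intro α
      refine hint1.mono (((hXfmeas α).comp hCvecMeas).mul (hg.comp hYmeas)).aestronglyMeasurable
        (Filter.Eventually.of_forall fun ω => ?_)
      rw [Real.norm_eq_abs, Real.norm_eq_abs, abs_mul, abs_mul]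
      refine mul_le_mul_of_nonneg_right ?_ (abs_nonneg _)
      rw [abs_of_nonneg (hXnonneg α _)]
      calc Xfun α (fun g' => C g' ω) ≤ Y ω := by
            rw [hY]
            exact Finset.single_le_sum (fun β _ => hXnonneg β _) (Finset.mem_univ α)
        _ ≤ |Y ω| := le_abs_self _
    -- apply Part 1 with f = g ∘ sum
    have hpart1 : ∀ α, ∫ ω, Xfun α (fun g' => C g' ω) * g (Y ω) ∂P
        = EX α * ∫ ω, ψ α (W ω) ∂P := by
      intro α
      have hfm : Measurable (fun x : V → ℝ => g (∑ β, x β)) :=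
        hg.comp (Finset.measurable_sum _ fun β _ => measurable_pi_apply β)
      have h1 : (fun ω => Xfun α (fun g' => C g' ω) *
          (fun x : V → ℝ => g (∑ β, x β)) (fun β => Xfun β (fun g' => C g' ω)))
          = fun ω => Xfun α (fun g' => C g' ω) * g (Y ω) := by
        funext ω
        simp only [hY]
      have h2 : (fun ω => (fun x : V → ℝ => g (∑ β, x β)) (fun β => Xb α β ω))
          = fun ω => ψ α (W ω) := by
        funext ω
        rw [hψW]
      have hres := part1 α (fun x : V → ℝ => g (∑ β, x β)) hfm
        (by rw [h1]; exact hXY α) (by rw [h2]; exact hIntψ α)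
      rw [h1, h2] at hres
      exact hres
    have hsum : ∫ ω, Y ω * g (Y ω) ∂P = ∑ α, ∫ ω, Xfun α (fun g' => C g' ω) * g (Y ω) ∂P := by
      rw [← integral_finset_sum _ fun α _ => hXY α]
      refine integral_congr_ae (Filter.Eventually.of_forall fun ω => ?_)
      show Y ω * g (Y ω) = ∑ α, Xfun α (fun g' => C g' ω) * g (Y ω)
      rw [hY, Finset.sum_mul]
    rw [hsum, hsplit, Finset.mul_sum]
    refine Finset.sum_congr rfl fun α _ => ?_
    rw [hpart1 α]
    have hμne : μ ≠ 0 := hμpos.ne'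
    field_simp
  · -- Part 3 : the coupling bound
    intro ω
    have hdiff : Ys ω - Y ω = ∑ β, (Xb (I ω) β ω - Xfun β (fun g => C g ω)) := by
      rw [hYs, hY, Finset.sum_sub_distrib]
    rw [hdiff]
    set T := Finset.univ.filter (fun β => (Vnbd β ∩ Vnbd (I ω)).Nonempty) with hT
    have hzero : ∀ β ∉ T, Xb (I ω) β ω - Xfun β (fun g => C g ω) = 0 := by
      intro β hβ
      rw [hT, Finset.mem_filter] at hβ
      push_neg at hβ
      have hempty : ¬ (Vnbd β ∩ Vnbd (I ω)).Nonempty := Finset.not_nonempty_iff_eq_empty.mpr (hβ (Finset.mem_univ β))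
      rw [hXb]
      have hloc : Xfun β (fun g => if g ∈ Vnbd (I ω) then Cs (I ω) g ω else C g ω)
          = Xfun β (fun g => C g ω) := by
        refine hXloc β _ _ fun g hg => ?_
        rw [if_neg]
        intro hgα
        exact hempty ⟨g, Finset.mem_inter.mpr ⟨hg, hgα⟩⟩
      rw [hloc, sub_self]
    have hsum0 : ∑ β, (Xb (I ω) β ω - Xfun β (fun g => C g ω))
        = ∑ β ∈ T, (Xb (I ω) β ω - Xfun β (fun g => C g ω)) :=
      (Finset.sum_subset (Finset.subset_univ T) (fun β _ hβ => hzero β hβ)).symm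
    rw [hsum0]
    calc |∑ β ∈ T, (Xb (I ω) β ω - Xfun β (fun g => C g ω))|
        ≤ ∑ β ∈ T, |Xb (I ω) β ω - Xfun β (fun g => C g ω)| := Finset.abs_sum_le_sum_abs _ _
      _ ≤ ∑ _β ∈ T, M := by
          refine Finset.sum_le_sum fun β _ => ?_
          rw [hXb, abs_sub_le_iff]
          constructor
          · linarith [hM β (fun g => if g ∈ Vnbd (I ω) then Cs (I ω) g ω else C g ω),
              hXnonneg β (fun g => C g ω)]
          · linarith [hM β (fun g => C g ω),
              hXnonneg β (fun g => if g ∈ Vnbd (I ω) then Cs (I ω) g ω else C g ω)]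
      _ = T.card * M := by rw [Finset.sum_const, nsmul_eq_mul]
      _ ≤ b * M := by
          refine mul_le_mul_of_nonneg_right ?_ hM0
          have hcard : T.card ≤ b := by
            rw [hb]
            exact Finset.le_sup
              (f := fun α => (Finset.univ.filter
                (fun β => (Vnbd β ∩ Vnbd α).Nonempty)).card)
              (Finset.mem_univ (I ω))
          exact_mod_cast hcard
end

section
/- Let ξ_1,…,ξ_n be i.i.d. Bernoulli(p) with p ∈ (0,1) and n ≥ 2m, extended periodically by ξ_{n+k} = ξ_k. Let Y = Σ_{i=1}^n ξ_i ξ_{i+1} ⋯ ξ_{i+m-1} count the number of m-runs. Then E[Y] = n p^m and Var(Y) = n p^m (1 + 2(p - p^m)/(1-p) - (2m-1) p^m). -/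
open MeasureTheory Finset

/-- The number of `m`-runs of ones in a cyclic sequence of `n` `Bool`s. -/
def runCount (n m : ℕ) [NeZero n] (ω : ZMod n → Bool) : ℝ :=
  ∑ i : ZMod n, ∏ j ∈ range m, (if ω (i + (j : ZMod n)) then (1 : ℝ) else 0)

namespace MRunsAux

variable {n m : ℕ} [NeZero n] {p : ℝ}

/-- The set of indices covered by a run starting at `t`. -/
def Aset (n m : ℕ) [NeZero n] (t : ZMod n) : Finset (ZMod n) :=
  (range m).image (fun j : ℕ => t + (j : ZMod n))

lemma castInjOn (hmn : m ≤ n) :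
    Set.InjOn (fun j : ℕ => ((j : ZMod n))) ↑(range m) := by
  intro a ha b hb hab
  simp only [coe_range, Set.mem_Iio] at ha hb
  have ha' := ZMod.val_cast_of_lt (n := n) (lt_of_lt_of_le ha hmn)
  have hb' := ZMod.val_cast_of_lt (n := n) (lt_of_lt_of_le hb hmn)
  rw [← ha', ← hb']
  simp only at hab
  rw [hab]

lemma addCastInjOn (hmn : m ≤ n) (t : ZMod n) :
    Set.InjOn (fun j : ℕ => t + (j : ZMod n)) ↑(range m) := by
  intro a ha b hb hab
  simp only at hab
  exact castInjOn hmn ha hb (by exact add_left_cancel hab)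

lemma card_Aset (hmn : m ≤ n) (t : ZMod n) : (Aset n m t).card = m := by
  rw [Aset, Finset.card_image_of_injOn (addCastInjOn hmn t), card_range]

lemma mem_Aset {t x : ZMod n} : x ∈ Aset n m t ↔ ∃ j < m, x = t + (j : ZMod n) := by
  simp [Aset, eq_comm]

lemma cast_eq_iff (hn : 2 * m ≤ n) {v j j' : ℕ} (hv : v < n) (hj : j < m) (hj' : j' < m) :
    ((j : ZMod n)) = (v : ZMod n) + (j' : ZMod n) ↔ (j = v + j' ∨ j + n = v + j') := by
  constructor
  · intro h
    rw [← Nat.cast_add, ZMod.natCast_eq_natCast_iff] at h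
    have h2 : j % n = (v + j') % n := h
    rcases lt_or_ge (v + j') n with hlt | hge
    · left
      rw [Nat.mod_eq_of_lt (by omega), Nat.mod_eq_of_lt hlt] at h2
      omega
    · right
      have hsub : (v + j') % n = v + j' - n := by
        rw [Nat.mod_eq_sub_mod hge, Nat.mod_eq_of_lt (by omega)]
      rw [Nat.mod_eq_of_lt (by omega), hsub] at h2
      omega
  · rintro (h | h)
    · rw [← Nat.cast_add, h]
    · have hcast : ((j : ℕ) : ZMod n) = ((j + n : ℕ) : ZMod n) := by
        push_cast [ZMod.natCast_self]
        ring
      rw [hcast, h]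
      push_cast
      ring

lemma inter_eq_image (t : ZMod n) :
    Aset n m 0 ∩ Aset n m t =
      ((range m).filter (fun j : ℕ => ((j : ZMod n)) ∈ Aset n m t)).image
        (fun j : ℕ => ((j : ZMod n))) := by
  have h0 : Aset n m 0 = (range m).image (fun j : ℕ => ((j : ZMod n))) := by
    simp [Aset]
  ext x
  simp only [mem_inter, h0, mem_image, mem_filter, mem_range]
  constructor
  · rintro ⟨⟨j, hj, rfl⟩, hx⟩
    exact ⟨j, ⟨hj, hx⟩, rfl⟩
  · rintro ⟨j, ⟨hj, hx⟩, rfl⟩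
    exact ⟨⟨j, hj, rfl⟩, hx⟩

lemma card_inter (hmn : m ≤ n) (t : ZMod n) :
    (Aset n m 0 ∩ Aset n m t).card =
      ((range m).filter (fun j : ℕ => ((j : ZMod n)) ∈ Aset n m t)).card := by
  rw [inter_eq_image]
  exact Finset.card_image_of_injOn
    ((castInjOn hmn).mono (by exact_mod_cast Finset.filter_subset _ _))

/-- The cardinality of the union `Aset 0 ∪ Aset v` for `v < n`. -/
lemma card_union_cases (hm : 1 ≤ m) (hn : 2 * m ≤ n) {v : ℕ} (hv : v < n) :
    (Aset n m 0 ∪ Aset n m (v : ZMod n)).card =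
      if v = 0 then m
      else if v < m then m + v
      else if v ≤ n - m then 2 * m
      else m + (n - v) := by
  have hmn : m ≤ n := by omega
  have hcu := Finset.card_union_add_card_inter (Aset n m 0) (Aset n m (v : ZMod n))
  rw [card_Aset hmn, card_Aset hmn, card_inter hmn] at hcu
  by_cases h0 : v = 0
  · subst h0
    rw [if_pos rfl]
    have : ((range m).filter (fun j : ℕ => ((j : ZMod n)) ∈ Aset n m ((0 : ℕ) : ZMod n))) = range m := by
      apply Finset.filter_true_of_mem
      intro j hj
      rw [mem_Aset]
      exact ⟨j, mem_range.mp hj, by push_cast; ring⟩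
    rw [this, card_range] at hcu
    omega
  rw [if_neg h0]
  by_cases h1 : v < m
  · rw [if_pos h1]
    have hf : ((range m).filter (fun j : ℕ => ((j : ZMod n)) ∈ Aset n m (v : ZMod n))) = Ico v m := by
      ext j
      simp only [mem_filter, mem_range, mem_Ico, mem_Aset]
      constructor
      · rintro ⟨hj, j', hj', hjj⟩
        rw [cast_eq_iff hn hv hj hj'] at hjj
        omega
      · intro hj
        refine ⟨hj.2, j - v, by omega, ?_⟩
        rw [cast_eq_iff hn hv hj.2 (by omega)]
        omega
    rw [hf, Nat.card_Ico] at hcu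
    omega
  rw [if_neg h1]
  by_cases h2 : v ≤ n - m
  · rw [if_pos h2]
    have hf : ((range m).filter (fun j : ℕ => ((j : ZMod n)) ∈ Aset n m (v : ZMod n))) = ∅ := by
      apply Finset.filter_false_of_mem
      intro j hj
      rw [mem_Aset]
      rintro ⟨j', hj', hjj⟩
      rw [cast_eq_iff hn hv (mem_range.mp hj) hj'] at hjj
      have := mem_range.mp hj
      omega
    rw [hf, Finset.card_empty] at hcu
    omega
  · rw [if_neg h2]
    have hf : ((range m).filter (fun j : ℕ => ((j : ZMod n)) ∈ Aset n m (v : ZMod n))) =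
        range (m - (n - v)) := by
      ext j
      simp only [mem_filter, mem_range, mem_Aset]
      constructor
      · rintro ⟨hj, j', hj', hjj⟩
        rw [cast_eq_iff hn hv hj hj'] at hjj
        omega
      · intro hj
        have hjm : j < m := by omega
        refine ⟨hjm, j + (n - v), by omega, ?_⟩
        rw [cast_eq_iff hn hv hjm (by omega)]
        omega
    rw [hf, card_range] at hcu
    omega

lemma card_union_translate (hmn : m ≤ n) (i k : ZMod n) :
    (Aset n m i ∪ Aset n m k).card = (Aset n m 0 ∪ Aset n m (k - i)).card := by
  have himg : ∀ t : ZMod n, (Aset n m t).image (fun x => i + x) = Aset n m (i + t) := by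
    intro t
    rw [Aset, Aset, Finset.image_image]
    congr 1
    funext j
    simp [add_assoc]
  have hik : i + (k - i) = k := by ring
  calc (Aset n m i ∪ Aset n m k).card
      = (((Aset n m 0 ∪ Aset n m (k - i))).image (fun x => i + x)).card := by
        rw [Finset.image_union, himg, himg, add_zero, hik]
    _ = _ := Finset.card_image_of_injective _ (add_right_injective i)


lemma sum_W_prod (p : ℝ) (S : Finset (ZMod n)) :
    ∑ ω : ZMod n → Bool, (∏ i, (if ω i then p else 1 - p)) *
      ∏ x ∈ S, (if ω x then (1:ℝ) else 0) = p ^ S.card := by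
  have key : ∀ ω : ZMod n → Bool,
      (∏ i, (if ω i then p else 1 - p)) * ∏ x ∈ S, (if ω x then (1:ℝ) else 0)
      = ∏ i : ZMod n, ((if ω i then p else 1 - p) *
          (if i ∈ S then (if ω i then (1:ℝ) else 0) else 1)) := by
    intro ω
    rw [Finset.prod_mul_distrib]
    congr 1
    rw [Finset.prod_ite_mem, Finset.univ_inter]
  simp_rw [key]
  have swap := Finset.prod_univ_sum (fun _ : ZMod n => (univ : Finset Bool))
    (fun i b => (if b then p else 1 - p) * (if i ∈ S then (if b then (1:ℝ) else 0) else 1))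
  rw [Fintype.piFinset_univ] at swap
  rw [← swap]
  have hterm : ∀ i : ZMod n, (∑ b : Bool, (if b then p else 1 - p) *
      (if i ∈ S then (if b then (1:ℝ) else 0) else 1)) = if i ∈ S then p else 1 := by
    intro i
    by_cases h : i ∈ S <;> simp [h] <;> ring
  simp_rw [hterm]
  rw [Finset.prod_ite_mem, Finset.univ_inter, Finset.prod_const]

lemma prod_ind_mul (ω : ZMod n → Bool) (S T : Finset (ZMod n)) :
    (∏ x ∈ S, (if ω x then (1:ℝ) else 0)) * (∏ x ∈ T, (if ω x then (1:ℝ) else 0)) =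
    ∏ x ∈ S ∪ T, (if ω x then (1:ℝ) else 0) := by
  rw [Finset.prod_boole, Finset.prod_boole, Finset.prod_boole]
  simp only [Finset.forall_mem_union]
  split_ifs <;> first | tauto | norm_num

lemma runCount_eq (hmn : m ≤ n) (ω : ZMod n → Bool) :
    runCount n m ω = ∑ i : ZMod n, ∏ x ∈ Aset n m i, (if ω x then (1:ℝ) else 0) := by
  unfold runCount
  apply Finset.sum_congr rfl
  intro i _
  rw [Aset, Finset.prod_image]
  intro a ha b hb hab
  exact addCastInjOn hmn i (by simpa using ha) (by simpa using hb) hab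

end MRunsAux

open MRunsAux in
/-- Mean and variance of the number of `m`-runs in `n` i.i.d. Bernoulli(`p`)
variables, counted cyclically. -/
theorem m_runs_mean_variance (n m : ℕ) [NeZero n] (hm : 1 ≤ m) (hn : 2 * m ≤ n)
    (p : ℝ) (hp0 : 0 < p) (hp1 : p < 1) :
    (∫ ω, runCount n m ω
        ∂(Measure.pi fun _ : ZMod n =>
          (PMF.bernoulli (Real.toNNReal p) (Real.toNNReal_le_one.mpr hp1.le)).toMeasure)) =
      n * p ^ m ∧
    (∫ ω, (runCount n m ω - n * p ^ m) ^ 2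
        ∂(Measure.pi fun _ : ZMod n =>
          (PMF.bernoulli (Real.toNNReal p) (Real.toNNReal_le_one.mpr hp1.le)).toMeasure)) =
      n * p ^ m * (1 + 2 * (p - p ^ m) / (1 - p) - (2 * (m : ℝ) - 1) * p ^ m) := by
  have hmn : m ≤ n := by omega
  set μ := (Measure.pi fun _ : ZMod n =>
          (PMF.bernoulli (Real.toNNReal p) (Real.toNNReal_le_one.mpr hp1.le)).toMeasure) with hμ
  -- integral as weighted sum
  have hInt : ∀ f : (ZMod n → Bool) → ℝ, ∫ ω, f ω ∂μ =
      ∑ ω : ZMod n → Bool, (∏ i, (if ω i then p else 1 - p)) * f ω := by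
    intro f
    rw [MeasureTheory.integral_fintype]
    · congr 1
      ext ω
      rw [smul_eq_mul]
      congr 1
      rw [hμ, ← Set.univ_pi_singleton, measureReal_def, Measure.pi_pi, ENNReal.toReal_prod]
      congr 1
      ext i
      rw [PMF.toMeasure_apply_singleton _ _ (measurableSet_singleton _), PMF.bernoulli_apply]
      cases h : ω i
      · simp only [h, if_neg Bool.false_ne_true, cond_false]
        rw [ENNReal.coe_toReal, NNReal.coe_sub (Real.toNNReal_le_one.mpr hp1.le), NNReal.coe_one,
          Real.coe_toNNReal _ hp0.le]
      · simp only [h, if_pos rfl, cond_true]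
        rw [ENNReal.coe_toReal, Real.coe_toNNReal _ hp0.le]; simp
    · exact Integrable.of_finite
  -- mean
  have mean : ∑ ω : ZMod n → Bool, (∏ i, (if ω i then p else 1 - p)) * runCount n m ω
      = n * p ^ m := by
    simp_rw [runCount_eq hmn, Finset.mul_sum]
    rw [Finset.sum_comm]
    rw [Finset.sum_congr rfl (fun i _ => by rw [sum_W_prod p, card_Aset hmn])]
    rw [Finset.sum_const, card_univ, ZMod.card, nsmul_eq_mul]
  -- total mass
  have mass : ∑ ω : ZMod n → Bool, (∏ i, (if ω i then p else 1 - p)) = 1 := by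
    have := sum_W_prod (n := n) p ∅
    simpa using this
  -- second moment
  have sq_eq : ∀ ω : ZMod n → Bool, (runCount n m ω) ^ 2 =
      ∑ i : ZMod n, ∑ k : ZMod n, ∏ x ∈ Aset n m i ∪ Aset n m k,
        (if ω x then (1:ℝ) else 0) := by
    intro ω
    rw [runCount_eq hmn, sq, Finset.sum_mul_sum]
    exact Finset.sum_congr rfl fun i _ => Finset.sum_congr rfl fun k _ => prod_ind_mul ω _ _
  have Esq : ∑ ω : ZMod n → Bool, (∏ i, (if ω i then p else 1 - p)) * (runCount n m ω) ^ 2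
      = ∑ i : ZMod n, ∑ k : ZMod n, p ^ (Aset n m i ∪ Aset n m k).card := by
    simp_rw [sq_eq, Finset.mul_sum]
    rw [Finset.sum_comm]
    refine Finset.sum_congr rfl fun i _ => ?_
    rw [Finset.sum_comm]
    refine Finset.sum_congr rfl fun k _ => ?_
    exact sum_W_prod p _
  -- reduce to a sum over range n
  have Esq2 : ∑ i : ZMod n, ∑ k : ZMod n, p ^ (Aset n m i ∪ Aset n m k).card
      = n * ∑ v ∈ range n, p ^ (Aset n m 0 ∪ Aset n m (v : ZMod n)).card := by
    have hstep : ∀ i : ZMod n, ∑ k : ZMod n, p ^ (Aset n m i ∪ Aset n m k).card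
        = ∑ v ∈ range n, p ^ (Aset n m 0 ∪ Aset n m (v : ZMod n)).card := by
      intro i
      have h1 : ∀ k : ZMod n, p ^ (Aset n m i ∪ Aset n m k).card
          = p ^ (Aset n m 0 ∪ Aset n m (k - i)).card := fun k => by
        rw [card_union_translate hmn]
      calc ∑ k : ZMod n, p ^ (Aset n m i ∪ Aset n m k).card
          = ∑ k : ZMod n, p ^ (Aset n m 0 ∪ Aset n m (k - i)).card :=
            Finset.sum_congr rfl fun k _ => h1 k
        _ = ∑ t : ZMod n, p ^ (Aset n m 0 ∪ Aset n m t).card :=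
            Fintype.sum_equiv (Equiv.subRight i) _ _ (fun x => rfl)
        _ = ∑ v ∈ range n, p ^ (Aset n m 0 ∪ Aset n m (v : ZMod n)).card := ?_
      refine Finset.sum_nbij' (fun t : ZMod n => t.val) (fun v : ℕ => (v : ZMod n))
        (fun t _ => mem_range.mpr (ZMod.val_lt t)) (fun v _ => mem_univ _)
        (fun t _ => ZMod.natCast_rightInverse t) (fun v hv => ZMod.val_cast_of_lt (mem_range.mp hv))
        (fun t _ => by rw [ZMod.natCast_rightInverse t])
    rw [Finset.sum_congr rfl fun i _ => hstep i, Finset.sum_const, card_univ, ZMod.card,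
      nsmul_eq_mul]
  -- evaluate the range sum
  obtain ⟨k, hk⟩ : ∃ k, n = 2 * m + k := ⟨n - 2 * m, by omega⟩
  have hsum : ∑ v ∈ range n, p ^ (Aset n m 0 ∪ Aset n m (v : ZMod n)).card
      = p ^ m + 2 * (∑ w ∈ Ico 1 m, p ^ (m + w)) + (k + 1 : ℝ) * p ^ (2 * m) := by
    have hval : ∀ v ∈ range n, p ^ (Aset n m 0 ∪ Aset n m (v : ZMod n)).card
        = (if v = 0 then p ^ m else if v < m then p ^ (m + v)
            else if v ≤ n - m then p ^ (2 * m) else p ^ (m + (n - v))) := by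
      intro v hv
      rw [card_union_cases hm hn (mem_range.mp hv)]
      split_ifs <;> rfl
    rw [Finset.sum_congr rfl hval, Finset.range_eq_Ico,
      ← Finset.sum_Ico_consecutive _ (by omega : (0:ℕ) ≤ n - m + 1) (by omega : n - m + 1 ≤ n),
      ← Finset.sum_Ico_consecutive _ (by omega : (0:ℕ) ≤ m) (by omega : m ≤ n - m + 1),
      ← Finset.sum_Ico_consecutive _ (by omega : (0:ℕ) ≤ 1) (by omega : 1 ≤ m)]
    have e1 : ∑ v ∈ Ico 0 1, (if v = 0 then p ^ m else if v < m then p ^ (m + v)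
        else if v ≤ n - m then p ^ (2 * m) else p ^ (m + (n - v))) = p ^ m := by
      norm_num
    have e2 : ∑ v ∈ Ico 1 m, (if v = 0 then p ^ m else if v < m then p ^ (m + v)
        else if v ≤ n - m then p ^ (2 * m) else p ^ (m + (n - v)))
        = ∑ w ∈ Ico 1 m, p ^ (m + w) := by
      refine Finset.sum_congr rfl fun v hv => ?_
      rw [mem_Ico] at hv
      rw [if_neg (by omega), if_pos hv.2]
    have e3 : ∑ v ∈ Ico m (n - m + 1), (if v = 0 then p ^ m else if v < m then p ^ (m + v)
        else if v ≤ n - m then p ^ (2 * m) else p ^ (m + (n - v)))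
        = (k + 1 : ℝ) * p ^ (2 * m) := by
      rw [Finset.sum_congr rfl (fun v hv => ?_), Finset.sum_const, Nat.card_Ico,
        nsmul_eq_mul]
      · congr 1
        have : n - m + 1 - m = k + 1 := by omega
        rw [this]
        push_cast
        ring
      · rw [mem_Ico] at hv
        rw [if_neg (by omega), if_neg (by omega), if_pos (by omega)]
    have e4 : ∑ v ∈ Ico (n - m + 1) n, (if v = 0 then p ^ m else if v < m then p ^ (m + v)
        else if v ≤ n - m then p ^ (2 * m) else p ^ (m + (n - v)))
        = ∑ w ∈ Ico 1 m, p ^ (m + w) := by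
      refine Finset.sum_nbij' (fun v => n - v) (fun w => n - w)
        (fun v hv => by simp only [mem_Ico] at hv ⊢; omega)
        (fun w hw => by simp only [mem_Ico] at hw ⊢; omega)
        (fun v hv => by simp only [mem_Ico] at hv; show n - (n - v) = v; omega)
        (fun w hw => by simp only [mem_Ico] at hw; show n - (n - w) = w; omega)
        (fun v hv => ?_)
      rw [mem_Ico] at hv
      rw [if_neg (by omega), if_neg (by omega), if_neg (by omega)]
    rw [e1, e2, e3, e4]
    ring
  -- geometric sum
  have hgeo : ∑ w ∈ Ico 1 m, p ^ (m + w) = p ^ m * ((p - p ^ m) / (1 - p)) := by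
    simp_rw [pow_add, ← Finset.mul_sum]
    congr 1
    rw [geom_sum_Ico (by intro h; rw [h] at hp1; exact lt_irrefl 1 hp1) hm, pow_one]
    rw [← neg_div_neg_eq]
    ring_nf
  constructor
  · rw [hInt, mean]
  · rw [hInt]
    have key2 : ∀ ω : ZMod n → Bool,
        (∏ i, (if ω i then p else 1 - p)) * (runCount n m ω - ↑n * p ^ m) ^ 2
        = (∏ i, (if ω i then p else 1 - p)) * (runCount n m ω) ^ 2
          - 2 * (↑n * p ^ m) * ((∏ i, (if ω i then p else 1 - p)) * runCount n m ω)
          + (↑n * p ^ m) ^ 2 * (∏ i, (if ω i then p else 1 - p)) := fun ω => by ring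
    rw [Finset.sum_congr rfl fun ω _ => key2 ω]
    rw [Finset.sum_add_distrib, Finset.sum_sub_distrib, ← Finset.mul_sum, ← Finset.mul_sum,
      mean, mass, Esq, Esq2, hsum, hgeo]
    have hn' : (n : ℝ) = 2 * m + k := by rw [hk]; push_cast; ring
    rw [mul_div_assoc]
    set G := (p - p ^ m) / (1 - p) with hG
    rw [hn']
    rw [two_mul m, pow_add]
    ring
end

section
/- Throw n balls independently and uniformly into m urns. Let Y be the number of non-isolated balls, i.e., Y = Σ_{i=1}^n 1(some other ball lands in the same urn as ball i). Then E[Y] = n(1 - (1 - 1/m)^{n-1}) and Var(Y) = n(1-1/m)^{n-1} + ((m-1)n(n-1)/m)(1 - 2/m)^{n-2} - n²(1 - 1/m)^{2n-2}. -/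
open scoped Classical
open MeasureTheory Finset

open scoped ENNReal

/-- The number of non-isolated balls: balls sharing their urn with another ball. -/
noncomputable def nonIsolated (n m : ℕ) (ω : Fin n → Fin m) : ℝ :=
  ∑ i : Fin n, if ∃ j : Fin n, j ≠ i ∧ ω j = ω i then 1 else 0


lemma integral_pi_uniform (n m : ℕ) [NeZero m] (f : (Fin n → Fin m) → ℝ) :
    (∫ ω, f ω ∂(Measure.pi fun _ : Fin n => (PMF.uniformOfFintype (Fin m)).toMeasure)) =
      ((m : ℝ)⁻¹) ^ n * ∑ ω : Fin n → Fin m, f ω := by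
  rw [integral_fintype (Integrable.of_finite)]
  simp only [measureReal_def]
  rw [Finset.mul_sum]
  refine Finset.sum_congr rfl fun ω _ => ?_
  have h1 : ({ω} : Set (Fin n → Fin m)) = Set.pi Set.univ (fun i => {ω i}) := by
    ext x; simp [funext_iff]
  rw [h1, Measure.pi_pi]
  have h2 : ∀ i : Fin n, (PMF.uniformOfFintype (Fin m)).toMeasure {ω i} = ((m : ℝ≥0∞))⁻¹ := by
    intro i
    rw [PMF.toMeasure_apply_singleton _ _ (measurableSet_singleton _)]
    simp [PMF.uniformOfFintype_apply]
  simp only [h2, Finset.prod_const, Finset.card_univ, Fintype.card_fin]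
  rw [ENNReal.toReal_pow, ENNReal.toReal_inv]
  simp [smul_eq_mul]


lemma my_prod_ite_one (n : ℕ) (i : Fin n) (c : ℕ) :
    ∏ j : Fin n, (if j = i then 1 else c) = c ^ (n - 1) := by
  rw [← Finset.mul_prod_erase univ _ (mem_univ i)]
  rw [if_pos rfl, one_mul]
  rw [Finset.prod_congr rfl (fun j hj => if_neg (Finset.ne_of_mem_erase hj))]
  rw [Finset.prod_const, Finset.card_erase_of_mem (mem_univ i), Finset.card_univ,
    Fintype.card_fin]

lemma countA (n m : ℕ) (i : Fin n) :
    (univ.filter (fun ω : Fin n → Fin m => ∀ j, j ≠ i → ω j ≠ ω i)).card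
      = m * (m - 1) ^ (n - 1) := by
  rw [Finset.card_eq_sum_card_fiberwise (f := fun ω => ω i) (t := univ)
    (fun ω _ => mem_univ _)]
  have key : ∀ a : Fin m,
      ((univ.filter (fun ω : Fin n → Fin m => ∀ j, j ≠ i → ω j ≠ ω i)).filter
        (fun ω => ω i = a)) = Fintype.piFinset (fun j => if j = i then {a} else {a}ᶜ) := by
    intro a
    ext ω
    simp only [Finset.mem_filter, Finset.mem_univ, true_and, Fintype.mem_piFinset]
    constructor
    · rintro ⟨h1, h2⟩ j
      by_cases hj : j = i
      · subst hj; simp [h2]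
      · simp only [if_neg hj, Finset.mem_compl, Finset.mem_singleton]
        rw [← h2]; exact h1 j hj
    · intro h
      have hi := h i
      rw [if_pos rfl, Finset.mem_singleton] at hi
      refine ⟨fun j hj => ?_, hi⟩
      have := h j
      rw [if_neg hj] at this
      simp only [Finset.mem_compl, Finset.mem_singleton] at this
      rw [hi]; exact this
  simp only [key, Fintype.card_piFinset]
  have : ∀ a : Fin m, ∏ j : Fin n, (if j = i then ({a} : Finset (Fin m)) else {a}ᶜ).card
      = (m - 1) ^ (n - 1) := by
    intro a
    have : ∀ j : Fin n, (if j = i then ({a} : Finset (Fin m)) else {a}ᶜ).card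
        = if j = i then 1 else m - 1 := by
      intro j
      by_cases hj : j = i <;> simp [hj, Finset.card_compl, Fintype.card_fin]
    rw [Finset.prod_congr rfl (fun j _ => this j), my_prod_ite_one]
  rw [Finset.sum_congr rfl (fun a _ => this a), Finset.sum_const, Finset.card_univ,
    Fintype.card_fin, smul_eq_mul]

lemma my_prod_ite_two (n : ℕ) (i j : Fin n) (hij : i ≠ j) (c : ℕ) :
    ∏ k : Fin n, (if k = i then 1 else if k = j then 1 else c) = c ^ (n - 2) := by
  rw [← Finset.mul_prod_erase univ _ (mem_univ i), if_pos rfl, one_mul]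
  have hj : j ∈ univ.erase i := Finset.mem_erase.mpr ⟨hij.symm, mem_univ j⟩
  rw [← Finset.mul_prod_erase _ _ hj, if_neg hij.symm, if_pos rfl, one_mul]
  have : ∀ k ∈ (univ.erase i).erase j,
      (if k = i then 1 else if k = j then 1 else c) = c := by
    intro k hk
    rw [Finset.mem_erase, Finset.mem_erase] at hk
    rw [if_neg hk.2.1, if_neg hk.1]
  rw [Finset.prod_congr rfl this, Finset.prod_const,
    Finset.card_erase_of_mem hj, Finset.card_erase_of_mem (mem_univ i),
    Finset.card_univ, Fintype.card_fin]
  norm_num [Nat.sub_sub]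

lemma countB (n m : ℕ) (i j : Fin n) (hij : i ≠ j) :
    (univ.filter (fun ω : Fin n → Fin m =>
        (∀ k, k ≠ i → ω k ≠ ω i) ∧ (∀ k, k ≠ j → ω k ≠ ω j))).card
      = (m * m - m) * (m - 2) ^ (n - 2) := by
  rw [Finset.card_eq_sum_card_fiberwise (f := fun ω => (ω i, ω j)) (t := univ.offDiag)
    (by
      intro ω hω
      rw [Finset.mem_coe, Finset.mem_filter] at hω
      exact Finset.mem_offDiag.mpr ⟨mem_univ _, mem_univ _, fun h => hω.2.1 j hij.symm h.symm⟩)]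
  have key : ∀ p ∈ univ.offDiag (α := Fin m),
      ((univ.filter (fun ω : Fin n → Fin m =>
        (∀ k, k ≠ i → ω k ≠ ω i) ∧ (∀ k, k ≠ j → ω k ≠ ω j))).filter
        (fun ω => (ω i, ω j) = p)).card = (m - 2) ^ (n - 2) := by
    rintro ⟨a, b⟩ hp
    have hab : a ≠ b := (Finset.mem_offDiag.mp hp).2.2
    have hset : ((univ.filter (fun ω : Fin n → Fin m =>
        (∀ k, k ≠ i → ω k ≠ ω i) ∧ (∀ k, k ≠ j → ω k ≠ ω j))).filter
        (fun ω => (ω i, ω j) = (a, b)))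
        = Fintype.piFinset (fun k => if k = i then {a} else if k = j then {b} else ({a, b}ᶜ)) := by
      ext ω
      simp only [Finset.mem_filter, Finset.mem_univ, true_and, Fintype.mem_piFinset,
        Prod.mk.injEq]
      constructor
      · rintro ⟨⟨h1, h2⟩, hia, hjb⟩ k
        by_cases hki : k = i
        · subst hki; simp [hia]
        · rw [if_neg hki]
          by_cases hkj : k = j
          · subst hkj; simp [hjb]
          · rw [if_neg hkj]
            simp only [Finset.mem_compl, Finset.mem_insert, Finset.mem_singleton]
            push_neg
            exact ⟨hia ▸ h1 k hki, hjb ▸ h2 k hkj⟩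
      · intro h
        have hia := h i; rw [if_pos rfl, Finset.mem_singleton] at hia
        have hjb := h j; rw [if_neg hij.symm, if_pos rfl, Finset.mem_singleton] at hjb
        refine ⟨⟨fun k hk => ?_, fun k hk => ?_⟩, hia, hjb⟩
        · have := h k
          rw [if_neg hk] at this
          by_cases hkj : k = j
          · subst hkj; rw [hjb, hia]; exact fun h' => hab h'.symm
          · rw [if_neg hkj] at this
            simp only [Finset.mem_compl, Finset.mem_insert, Finset.mem_singleton] at this
            push_neg at this
            rw [hia]; exact this.1
        · have := h k
          by_cases hki : k = i
          · subst hki; rw [hia, hjb]; exact hab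
          · rw [if_neg hki, if_neg hk] at this
            simp only [Finset.mem_compl, Finset.mem_insert, Finset.mem_singleton] at this
            push_neg at this
            rw [hjb]; exact this.2
    rw [hset, Fintype.card_piFinset]
    have hcard : ∀ k : Fin n,
        (if k = i then ({a} : Finset (Fin m)) else if k = j then {b} else ({a, b}ᶜ)).card
          = if k = i then 1 else if k = j then 1 else m - 2 := by
      intro k
      by_cases hki : k = i
      · simp [hki]
      · by_cases hkj : k = j
        · subst hkj; rw [if_neg hki, if_neg hki, if_pos rfl, if_pos rfl, Finset.card_singleton]
        · rw [if_neg hki, if_neg hki, if_neg hkj, if_neg hkj, Finset.card_compl,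
            Finset.card_pair hab, Fintype.card_fin]
    rw [Finset.prod_congr rfl (fun k _ => hcard k), my_prod_ite_two n i j hij]
  rw [Finset.sum_congr rfl key, Finset.sum_const, Finset.offDiag_card, Finset.card_univ,
    Fintype.card_fin, smul_eq_mul]


lemma sumI (n m : ℕ) (i : Fin n) :
    ∑ ω : Fin n → Fin m, (if ∃ j, j ≠ i ∧ ω j = ω i then (1:ℝ) else 0)
      = (m:ℝ)^n - ((m * (m-1)^(n-1) : ℕ) : ℝ) := by
  rw [Finset.sum_boole]
  have hiff : ∀ ω : Fin n → Fin m, (∃ j, j ≠ i ∧ ω j = ω i)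
      ↔ ¬(∀ j, j ≠ i → ω j ≠ ω i) := by
    intro ω; push_neg; rfl
  have h1 : (univ.filter (fun ω : Fin n → Fin m => ∃ j, j ≠ i ∧ ω j = ω i))
      = univ \ (univ.filter (fun ω : Fin n → Fin m => ∀ j, j ≠ i → ω j ≠ ω i)) := by
    rw [← Finset.filter_not]
    exact Finset.filter_congr (fun ω _ => hiff ω)
  rw [h1, Finset.card_sdiff_of_subset (Finset.filter_subset _ _), Finset.card_univ]
  have hcard : Fintype.card (Fin n → Fin m) = m ^ n := by simp
  rw [Nat.cast_sub (le_trans (Finset.card_filter_le _ _) (by rw [Finset.card_univ, hcard]))]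
  rw [hcard, countA]
  push_cast
  ring
section T5
variable (n m : ℕ)

lemma sumII (i j : Fin n) (hij : i ≠ j) :
    ∑ ω : Fin n → Fin m,
        (if ∃ k, k ≠ i ∧ ω k = ω i then (1:ℝ) else 0) *
        (if ∃ k, k ≠ j ∧ ω k = ω j then (1:ℝ) else 0)
      = (m:ℝ)^n - 2 * ((m * (m-1)^(n-1) : ℕ) : ℝ)
          + (((m*m - m) * (m-2)^(n-2) : ℕ) : ℝ) := by
  have key : ∀ ω : Fin n → Fin m,
      (if ∃ k, k ≠ i ∧ ω k = ω i then (1:ℝ) else 0) *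
        (if ∃ k, k ≠ j ∧ ω k = ω j then (1:ℝ) else 0)
      = 1 - (if ∀ k, k ≠ i → ω k ≠ ω i then (1:ℝ) else 0)
          - (if ∀ k, k ≠ j → ω k ≠ ω j then (1:ℝ) else 0)
          + (if (∀ k, k ≠ i → ω k ≠ ω i) ∧ (∀ k, k ≠ j → ω k ≠ ω j) then (1:ℝ) else 0) := by
    intro ω
    have e1 : (∃ k, k ≠ i ∧ ω k = ω i) ↔ ¬(∀ k, k ≠ i → ω k ≠ ω i) := by push_neg; rfl
    have e2 : (∃ k, k ≠ j ∧ ω k = ω j) ↔ ¬(∀ k, k ≠ j → ω k ≠ ω j) := by push_neg; rfl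
    by_cases h1 : ∀ k, k ≠ i → ω k ≠ ω i
    · rw [if_neg (fun hE => (e1.mp hE) h1), if_pos h1]
      by_cases h2 : ∀ k, k ≠ j → ω k ≠ ω j
      · rw [if_neg (fun hE => (e2.mp hE) h2), if_pos h2, if_pos ⟨h1, h2⟩]; ring
      · rw [if_pos (e2.mpr h2), if_neg h2, if_neg (fun h => h2 h.2)]; ring
    · rw [if_pos (e1.mpr h1), if_neg h1]
      by_cases h2 : ∀ k, k ≠ j → ω k ≠ ω j
      · rw [if_neg (fun hE => (e2.mp hE) h2), if_pos h2, if_neg (fun h => h1 h.1)]; ring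
      · rw [if_pos (e2.mpr h2), if_neg h2, if_neg (fun h => h1 h.1)]; ring
  rw [Finset.sum_congr rfl (fun ω _ => key ω)]
  rw [Finset.sum_add_distrib, Finset.sum_sub_distrib, Finset.sum_sub_distrib]
  rw [Finset.sum_const, Finset.sum_boole, Finset.sum_boole, Finset.sum_boole]
  have hcard : Fintype.card (Fin n → Fin m) = m ^ n := by simp
  rw [Finset.card_univ, hcard, countA, countA]
  have hB : (Finset.univ.filter (fun ω : Fin n → Fin m =>
      (∀ k, k ≠ i → ω k ≠ ω i) ∧ (∀ k, k ≠ j → ω k ≠ ω j))).card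
      = (m*m - m) * (m-2)^(n-2) := countB n m i j hij
  rw [hB]
  push_cast
  ring

lemma sumY :
    ∑ ω : Fin n → Fin m, nonIsolated n m ω
      = n * ((m:ℝ)^n - ((m * (m-1)^(n-1) : ℕ) : ℝ)) := by
  unfold nonIsolated
  rw [Finset.sum_comm]
  rw [Finset.sum_congr rfl (fun i _ => sumI n m i)]
  rw [Finset.sum_const, Finset.card_univ, Fintype.card_fin, nsmul_eq_mul]

lemma sumYsq (hn : 1 ≤ n) :
    ∑ ω : Fin n → Fin m, (nonIsolated n m ω)^2
      = n * ((m:ℝ)^n - ((m * (m-1)^(n-1) : ℕ) : ℝ))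
        + (n * ((n:ℝ)-1)) * ((m:ℝ)^n - 2 * ((m * (m-1)^(n-1) : ℕ) : ℝ)
            + (((m*m - m) * (m-2)^(n-2) : ℕ) : ℝ)) := by
  unfold nonIsolated
  have expand : ∀ ω : Fin n → Fin m,
      (∑ i : Fin n, if ∃ j, j ≠ i ∧ ω j = ω i then (1:ℝ) else 0)^2
      = ∑ i : Fin n, ∑ j : Fin n,
          (if ∃ k, k ≠ i ∧ ω k = ω i then (1:ℝ) else 0) *
          (if ∃ k, k ≠ j ∧ ω k = ω j then (1:ℝ) else 0) := by
    intro ω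
    rw [sq, Finset.sum_mul_sum]
  rw [Finset.sum_congr rfl (fun ω _ => expand ω)]
  rw [Finset.sum_comm]
  have inner : ∀ i : Fin n,
      ∑ ω : Fin n → Fin m, ∑ j : Fin n,
          (if ∃ k, k ≠ i ∧ ω k = ω i then (1:ℝ) else 0) *
          (if ∃ k, k ≠ j ∧ ω k = ω j then (1:ℝ) else 0)
      = ((m:ℝ)^n - ((m * (m-1)^(n-1) : ℕ) : ℝ))
        + ((n:ℝ)-1) * ((m:ℝ)^n - 2 * ((m * (m-1)^(n-1) : ℕ) : ℝ)
            + (((m*m - m) * (m-2)^(n-2) : ℕ) : ℝ)) := by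
    intro i
    rw [Finset.sum_comm]
    rw [← Finset.sum_erase_add _ _ (Finset.mem_univ i)]
    have diag : ∑ ω : Fin n → Fin m,
        (if ∃ k, k ≠ i ∧ ω k = ω i then (1:ℝ) else 0) *
        (if ∃ k, k ≠ i ∧ ω k = ω i then (1:ℝ) else 0)
        = (m:ℝ)^n - ((m * (m-1)^(n-1) : ℕ) : ℝ) := by
      rw [← sumI n m i]
      refine Finset.sum_congr rfl fun ω _ => ?_
      by_cases h : ∃ k, k ≠ i ∧ ω k = ω i
      · rw [if_pos h]; ring
      · rw [if_neg h]; ring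
    have offd : ∀ j ∈ Finset.univ.erase i,
        ∑ ω : Fin n → Fin m,
          (if ∃ k, k ≠ i ∧ ω k = ω i then (1:ℝ) else 0) *
          (if ∃ k, k ≠ j ∧ ω k = ω j then (1:ℝ) else 0)
        = (m:ℝ)^n - 2 * ((m * (m-1)^(n-1) : ℕ) : ℝ)
            + (((m*m - m) * (m-2)^(n-2) : ℕ) : ℝ) := by
      intro j hj
      exact sumII n m i j (Finset.ne_of_mem_erase hj).symm
    rw [Finset.sum_congr rfl offd, diag, Finset.sum_const,
      Finset.card_erase_of_mem (Finset.mem_univ i), Finset.card_univ, Fintype.card_fin,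
      nsmul_eq_mul, Nat.cast_sub hn, Nat.cast_one]
    ring
  rw [Finset.sum_congr rfl (fun i _ => inner i), Finset.sum_const, Finset.card_univ,
    Fintype.card_fin, nsmul_eq_mul]
  ring

end T5

/-- Mean and variance of the number of non-isolated balls when `n` balls are thrown
independently and uniformly into `m` urns. -/
theorem urn_nonisolated_mean_variance (n m : ℕ) [NeZero m] (hn : 1 ≤ n) :
    (∫ ω, nonIsolated n m ω
        ∂(Measure.pi fun _ : Fin n => (PMF.uniformOfFintype (Fin m)).toMeasure)) =
      n * (1 - (1 - 1 / (m : ℝ)) ^ (n - 1)) ∧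
    (∫ ω, (nonIsolated n m ω - n * (1 - (1 - 1 / (m : ℝ)) ^ (n - 1))) ^ 2
        ∂(Measure.pi fun _ : Fin n => (PMF.uniformOfFintype (Fin m)).toMeasure)) =
      n * (1 - 1 / (m : ℝ)) ^ (n - 1) +
        ((m : ℝ) - 1) * n * (n - 1) / m * (1 - 2 / (m : ℝ)) ^ (n - 2) -
        (n : ℝ) ^ 2 * (1 - 1 / (m : ℝ)) ^ (2 * n - 2) := by
  have hM : (m:ℝ) ≠ 0 := Nat.cast_ne_zero.mpr (NeZero.ne m)
  have hm1 : 1 ≤ m := Nat.one_le_iff_ne_zero.mpr (NeZero.ne m)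
  have hA : ((m * (m-1)^(n-1) : ℕ) : ℝ) = (m:ℝ) * ((m:ℝ)-1)^(n-1) := by
    rw [Nat.cast_mul, Nat.cast_pow, Nat.cast_sub hm1, Nat.cast_one]
  have hB : (((m*m - m) * (m-2)^(n-2) : ℕ) : ℝ)
      = ((m:ℝ)*(m:ℝ) - (m:ℝ)) * ((m:ℝ)-2)^(n-2) := by
    rcases Nat.lt_or_ge m 2 with h | h
    · interval_cases m
      · simp
    · rw [Nat.cast_mul, Nat.cast_sub (Nat.le_mul_of_pos_left m (by omega)),
        Nat.cast_pow, Nat.cast_sub h, Nat.cast_mul]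
      norm_num
  have h11 : 1 - 1/(m:ℝ) = ((m:ℝ)-1)/(m:ℝ) := by field_simp
  have h12 : 1 - 2/(m:ℝ) = ((m:ℝ)-2)/(m:ℝ) := by field_simp
  constructor
  · rw [integral_pi_uniform, sumY, hA]
    obtain ⟨k, rfl⟩ : ∃ k, n = k + 1 := ⟨n-1, by omega⟩
    simp only [Nat.add_sub_cancel]
    rw [h11, div_pow, inv_pow]
    field_simp
    ring
  · rw [integral_pi_uniform]
    set c : ℝ := ↑n * (1 - (1 - 1 / ↑m) ^ (n - 1)) with hc
    have hpt : ∀ ω : Fin n → Fin m, (nonIsolated n m ω - c)^2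
        = (nonIsolated n m ω)^2 - 2*c*(nonIsolated n m ω) + c^2 := fun ω => by ring
    rw [Finset.sum_congr rfl (fun ω _ => hpt ω), Finset.sum_add_distrib,
      Finset.sum_sub_distrib, ← Finset.mul_sum, Finset.sum_const, Finset.card_univ]
    have hcard : Fintype.card (Fin n → Fin m) = m ^ n := by simp
    rw [hcard, sumYsq n m hn, sumY, hA, hB, nsmul_eq_mul, hc, h11, h12, div_pow, div_pow]
    obtain ⟨k, rfl⟩ : ∃ k, n = k + 1 := ⟨n-1, by omega⟩
    rcases k with _ | j
    · norm_num
    · have e1 : j + 1 + 1 - 1 = j + 1 := by omega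
      have e2 : j + 1 + 1 - 2 = j := by omega
      have e3 : 2 * (j + 1 + 1) - 2 = 2*j + 2 := by omega
      rw [e1, e2, e3]
      simp only [div_pow, inv_pow]
      push_cast
      field_simp
      ring
end

section
/- In the uniform urn allocation model with n balls and m urns where n/m → α ∈ (0,∞) as n,m → ∞, the variance σ² of the number of non-isolated balls satisfies σ²/n → e^{-α} - e^{-2α}(α² - α + 1), and this limit is strictly positive for all α ∈ (0,∞). -/
open Filter Real Topology Finset

private lemma aux_pow_limit (n m : ℕ → ℕ) (α c : ℝ) (j : ℕ)
    (hn : Tendsto n atTop atTop) (hm : Tendsto m atTop atTop)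
    (hratio : Tendsto (fun k => (n k : ℝ) / (m k : ℝ)) atTop (nhds α)) :
    Tendsto (fun k => (1 - c / (m k : ℝ)) ^ (n k - j)) atTop (nhds (Real.exp (-(c * α)))) := by
  have hm' : Tendsto (fun k => (m k : ℝ)) atTop atTop :=
    tendsto_natCast_atTop_atTop.comp hm
  have hlog : Tendsto (fun k => (m k : ℝ) * Real.log (1 + (-c) / (m k))) atTop (nhds (-c)) :=
    (Real.tendsto_mul_log_one_add_div_atTop (-c)).comp hm'
  have hj : Tendsto (fun k => ((n k : ℝ) - j) / (m k : ℝ)) atTop (nhds α) := by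
    have h0 : Tendsto (fun k => (j : ℝ) / (m k : ℝ)) atTop (nhds 0) :=
      tendsto_const_nhds.div_atTop hm'
    have h := hratio.sub h0
    simp only [sub_zero] at h
    refine h.congr fun k => ?_
    rw [sub_div]
  have hmain : Tendsto
      (fun k => (((n k : ℝ) - j) / (m k : ℝ)) * ((m k : ℝ) * Real.log (1 + (-c) / (m k))))
      atTop (nhds (α * (-c))) := hj.mul hlog
  have hexp := (Real.continuous_exp.tendsto _).comp hmain
  have hval : Real.exp (α * (-c)) = Real.exp (-(c * α)) := by ring_nf
  rw [hval] at hexp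
  refine hexp.congr' ?_
  filter_upwards [hm'.eventually_gt_atTop (max c 0), hn.eventually_ge_atTop j] with k hk1 hk2
  have hMpos : (0 : ℝ) < (m k : ℝ) := lt_of_le_of_lt (le_max_right _ _) hk1
  have hMc : c < (m k : ℝ) := lt_of_le_of_lt (le_max_left _ _) hk1
  have hbpos : 0 < 1 - c / (m k : ℝ) := by
    rw [sub_pos, div_lt_one hMpos]; exact hMc
  have h1 : (1 : ℝ) + (-c) / (m k : ℝ) = 1 - c / (m k : ℝ) := by ring
  simp only [Function.comp_apply, h1]
  have harg : ((n k : ℝ) - j) / (m k : ℝ) * ((m k : ℝ) * Real.log (1 - c / (m k : ℝ)))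
      = ((n k - j : ℕ) : ℝ) * Real.log (1 - c / (m k : ℝ)) := by
    rw [Nat.cast_sub hk2]; field_simp
  rw [harg, Real.exp_nat_mul, Real.exp_log hbpos]

/-- The variance of the number of non-isolated balls with `n` balls and `m` urns. -/
noncomputable def urnVar (n m : ℕ) : ℝ :=
  n * (1 - 1 / (m : ℝ)) ^ (n - 1) +
    ((m : ℝ) - 1) * n * (n - 1) / m * (1 - 2 / (m : ℝ)) ^ (n - 2) -
    (n : ℝ) ^ 2 * (1 - 1 / (m : ℝ)) ^ (2 * n - 2)

private noncomputable def urnS (n m : ℕ → ℕ) (k : ℕ) : ℝ :=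
  ∑ i ∈ Finset.range (n k - 1),
    ((1 - 1 / (m k : ℝ)) ^ 2) ^ i * (1 - 2 / (m k : ℝ)) ^ (n k - 1 - 1 - i)

private lemma urn_limit_part (n m : ℕ → ℕ) (α : ℝ) (hα : 0 < α)
    (hn : Tendsto n atTop atTop) (hm : Tendsto m atTop atTop)
    (hratio : Tendsto (fun k => (n k : ℝ) / (m k : ℝ)) atTop (nhds α)) :
    Tendsto (fun k => urnVar (n k) (m k) / (n k : ℝ)) atTop
      (nhds (Real.exp (-α) - Real.exp (-2 * α) * (α ^ 2 - α + 1))) := by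
  have hm' : Tendsto (fun k => (m k : ℝ)) atTop atTop := tendsto_natCast_atTop_atTop.comp hm
  have hn' : Tendsto (fun k => (n k : ℝ)) atTop atTop := tendsto_natCast_atTop_atTop.comp hn
  have hNm1 : Tendsto (fun k => ((n k : ℝ) - 1) / (m k : ℝ)) atTop (nhds α) := by
    have h0 : Tendsto (fun k => (1 : ℝ) / (m k : ℝ)) atTop (nhds 0) :=
      tendsto_const_nhds.div_atTop hm'
    have h := hratio.sub h0
    simp only [sub_zero] at h
    exact h.congr fun k => (sub_div _ _ _).symm
  have hA := aux_pow_limit n m α 1 1 hn hm hratio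
  have hA2 := aux_pow_limit n m α 1 2 hn hm hratio
  have hB1 := aux_pow_limit n m α 2 1 hn hm hratio
  have hB2 := aux_pow_limit n m α 2 2 hn hm hratio
  -- squeeze for T k = (n/m²) * S
  have hT : Tendsto (fun k => ((n k : ℝ) / (m k : ℝ) ^ 2) * urnS n m k) atTop
      (nhds (α * α * Real.exp (-(2 * α)))) := by
    have hLo : Tendsto (fun k => ((n k : ℝ) / (m k : ℝ)) * (((n k : ℝ) - 1) / (m k : ℝ)) *
        (1 - 2 / (m k : ℝ)) ^ (n k - 2)) atTop (nhds (α * α * Real.exp (-(2 * α)))) :=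
      (hratio.mul hNm1).mul hB2
    have hUp : Tendsto (fun k => ((n k : ℝ) / (m k : ℝ)) * (((n k : ℝ) - 1) / (m k : ℝ)) *
        ((1 - 1 / (m k : ℝ)) ^ (n k - 2)) ^ 2) atTop (nhds (α * α * Real.exp (-(2 * α)))) := by
      have h := (hratio.mul hNm1).mul (hA2.pow 2)
      have hval : α * α * Real.exp (-(1 * α)) ^ 2 = α * α * Real.exp (-(2 * α)) := by
        rw [sq, ← Real.exp_add]; ring_nf
      rwa [hval] at h
    refine tendsto_of_tendsto_of_tendsto_of_le_of_le' hLo hUp ?_ ?_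
    · filter_upwards [hn.eventually_ge_atTop 2, hm.eventually_ge_atTop 3] with k hn2 hm3
      have hM3 : (3 : ℝ) ≤ (m k : ℝ) := by exact_mod_cast hm3
      have hMpos : (0 : ℝ) < (m k : ℝ) := by linarith
      have hb0 : (0 : ℝ) ≤ 1 - 2 / (m k : ℝ) := by
        rw [sub_nonneg]; rw [div_le_one hMpos]; linarith
      have ha2 : 1 - 2 / (m k : ℝ) ≤ (1 - 1 / (m k : ℝ)) ^ 2 := by
        have h : (1 - 1 / (m k : ℝ)) ^ 2 - (1 - 2 / (m k : ℝ)) = (1 / (m k : ℝ)) ^ 2 := by ring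
        nlinarith [sq_nonneg (1 / (m k : ℝ))]
      have hSlow : ((n k - 1 : ℕ) : ℝ) * (1 - 2 / (m k : ℝ)) ^ (n k - 2) ≤ urnS n m k := by
        rw [urnS]
        calc ((n k - 1 : ℕ) : ℝ) * (1 - 2 / (m k : ℝ)) ^ (n k - 2)
            = ∑ _i ∈ Finset.range (n k - 1), (1 - 2 / (m k : ℝ)) ^ (n k - 2) := by
              rw [Finset.sum_const, Finset.card_range, nsmul_eq_mul]
          _ ≤ _ := by
              refine Finset.sum_le_sum fun i hi => ?_
              have hi' : i < n k - 1 := Finset.mem_range.mp hi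
              have he : n k - 2 = i + (n k - 1 - 1 - i) := by omega
              rw [he, pow_add]
              exact mul_le_mul_of_nonneg_right (pow_le_pow_left₀ hb0 ha2 i)
                (pow_nonneg hb0 _)
      have hcast : ((n k - 1 : ℕ) : ℝ) = (n k : ℝ) - 1 := by
        rw [Nat.cast_sub (by omega)]; norm_num
      have hnn : (0 : ℝ) ≤ (n k : ℝ) / (m k : ℝ) ^ 2 := by positivity
      calc (n k : ℝ) / (m k : ℝ) * (((n k : ℝ) - 1) / (m k : ℝ)) * (1 - 2 / (m k : ℝ)) ^ (n k - 2)
          = ((n k : ℝ) / (m k : ℝ) ^ 2) * (((n k - 1 : ℕ) : ℝ) * (1 - 2 / (m k : ℝ)) ^ (n k - 2)) := by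
            rw [hcast]; ring
        _ ≤ ((n k : ℝ) / (m k : ℝ) ^ 2) * urnS n m k := mul_le_mul_of_nonneg_left hSlow hnn
    · filter_upwards [hn.eventually_ge_atTop 2, hm.eventually_ge_atTop 3] with k hn2 hm3
      have hM3 : (3 : ℝ) ≤ (m k : ℝ) := by exact_mod_cast hm3
      have hMpos : (0 : ℝ) < (m k : ℝ) := by linarith
      have hb0 : (0 : ℝ) ≤ 1 - 2 / (m k : ℝ) := by
        rw [sub_nonneg]; rw [div_le_one hMpos]; linarith
      have ha2 : 1 - 2 / (m k : ℝ) ≤ (1 - 1 / (m k : ℝ)) ^ 2 := by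
        have h : (1 - 1 / (m k : ℝ)) ^ 2 - (1 - 2 / (m k : ℝ)) = (1 / (m k : ℝ)) ^ 2 := by ring
        nlinarith [sq_nonneg (1 / (m k : ℝ))]
      have hSup : urnS n m k ≤ ((n k - 1 : ℕ) : ℝ) * ((1 - 1 / (m k : ℝ)) ^ 2) ^ (n k - 2) := by
        rw [urnS]
        calc ∑ i ∈ Finset.range (n k - 1),
              ((1 - 1 / (m k : ℝ)) ^ 2) ^ i * (1 - 2 / (m k : ℝ)) ^ (n k - 1 - 1 - i)
            ≤ ∑ _i ∈ Finset.range (n k - 1), ((1 - 1 / (m k : ℝ)) ^ 2) ^ (n k - 2) := by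
              refine Finset.sum_le_sum fun i hi => ?_
              have hi' : i < n k - 1 := Finset.mem_range.mp hi
              have he : n k - 2 = i + (n k - 1 - 1 - i) := by omega
              rw [he, pow_add]
              exact mul_le_mul_of_nonneg_left (pow_le_pow_left₀ hb0 ha2 _) (pow_nonneg (sq_nonneg _) _)
          _ = ((n k - 1 : ℕ) : ℝ) * ((1 - 1 / (m k : ℝ)) ^ 2) ^ (n k - 2) := by
              rw [Finset.sum_const, Finset.card_range, nsmul_eq_mul]
      have hcast : ((n k - 1 : ℕ) : ℝ) = (n k : ℝ) - 1 := by
        rw [Nat.cast_sub (by omega)]; norm_num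
      have hnn : (0 : ℝ) ≤ (n k : ℝ) / (m k : ℝ) ^ 2 := by positivity
      calc ((n k : ℝ) / (m k : ℝ) ^ 2) * urnS n m k
          ≤ ((n k : ℝ) / (m k : ℝ) ^ 2) * (((n k - 1 : ℕ) : ℝ) * ((1 - 1 / (m k : ℝ)) ^ 2) ^ (n k - 2)) :=
            mul_le_mul_of_nonneg_left hSup hnn
        _ = (n k : ℝ) / (m k : ℝ) * (((n k : ℝ) - 1) / (m k : ℝ)) * ((1 - 1 / (m k : ℝ)) ^ (n k - 2)) ^ 2 := by
            rw [hcast, ← pow_mul, ← pow_mul, Nat.mul_comm]; ring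
  -- combine
  have hG : Tendsto (fun k => (1 - 1 / (m k : ℝ)) ^ (n k - 1) +
      (((n k : ℝ) - 1) / (m k : ℝ)) * (1 - 2 / (m k : ℝ)) ^ (n k - 2) -
      (1 - 2 / (m k : ℝ)) ^ (n k - 1) - ((n k : ℝ) / (m k : ℝ) ^ 2) * urnS n m k) atTop
      (nhds (Real.exp (-(1 * α)) + α * Real.exp (-(2 * α)) - Real.exp (-(2 * α)) -
        α * α * Real.exp (-(2 * α)))) :=
    ((hA.add (hNm1.mul hB2)).sub hB1).sub hT
  have hval : Real.exp (-(1 * α)) + α * Real.exp (-(2 * α)) - Real.exp (-(2 * α)) -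
      α * α * Real.exp (-(2 * α)) = Real.exp (-α) - Real.exp (-2 * α) * (α ^ 2 - α + 1) := by
    ring_nf
  rw [hval] at hG
  refine hG.congr' ?_
  filter_upwards [hn.eventually_ge_atTop 2, hm.eventually_ge_atTop 3] with k hn2 hm3
  have hM3 : (3 : ℝ) ≤ (m k : ℝ) := by exact_mod_cast hm3
  have hN2 : (2 : ℝ) ≤ (n k : ℝ) := by exact_mod_cast hn2
  have hMpos : (0 : ℝ) < (m k : ℝ) := by linarith
  have hNpos : (0 : ℝ) < (n k : ℝ) := by linarith
  have hp : 2 * n k - 2 = 2 * (n k - 1) := by omega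
  have hpow : (1 - 1 / (m k : ℝ)) ^ (2 * n k - 2) = ((1 - 1 / (m k : ℝ)) ^ 2) ^ (n k - 1) := by
    rw [hp, pow_mul]
  have hd : (1 - 1 / (m k : ℝ)) ^ 2 - (1 - 2 / (m k : ℝ)) = 1 / (m k : ℝ) ^ 2 := by
    field_simp; ring
  have hgeom := geom_sum₂_mul ((1 - 1 / (m k : ℝ)) ^ 2) (1 - 2 / (m k : ℝ)) (n k - 1)
  rw [hd] at hgeom
  have ha2n : ((1 - 1 / (m k : ℝ)) ^ 2) ^ (n k - 1) =
      (1 - 2 / (m k : ℝ)) ^ (n k - 1) + urnS n m k * (1 / (m k : ℝ) ^ 2) := by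
    rw [urnS]; linarith [hgeom]
  have hb1 : (1 - 2 / (m k : ℝ)) ^ (n k - 1) = (1 - 2 / (m k : ℝ)) * (1 - 2 / (m k : ℝ)) ^ (n k - 2) := by
    have h : n k - 1 = (n k - 2) + 1 := by omega
    rw [h, pow_succ]; ring
  rw [urnVar, hpow, ha2n, hb1]
  field_simp
  ring

/-- If `n/m → α ∈ (0,∞)`, then the variance `σ²` of the number of non-isolated balls
satisfies `σ²/n → e^{-α} - e^{-2α}(α² - α + 1) > 0`. -/
theorem urn_variance_limit (n m : ℕ → ℕ) (α : ℝ) (hα : 0 < α)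
    (hn : Tendsto n atTop atTop) (hm : Tendsto m atTop atTop)
    (hratio : Tendsto (fun k => (n k : ℝ) / (m k : ℝ)) atTop (nhds α)) :
    Tendsto (fun k => urnVar (n k) (m k) / (n k : ℝ)) atTop
      (nhds (Real.exp (-α) - Real.exp (-2 * α) * (α ^ 2 - α + 1))) ∧
    0 < Real.exp (-α) - Real.exp (-2 * α) * (α ^ 2 - α + 1) := by
  refine ⟨urn_limit_part n m α hα hn hm hratio, ?_⟩
  have hs := Real.sum_le_exp_of_nonneg hα.le 4
  have hs' : 1 + α + α ^ 2 / 2 + α ^ 3 / 6 ≤ Real.exp α := by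
    have h4 : ∑ i ∈ Finset.range 4, α ^ i / (Nat.factorial i) =
        1 + α + α ^ 2 / 2 + α ^ 3 / 6 := by
      simp [Finset.sum_range_succ, Nat.factorial]
    rw [h4] at hs; exact hs
  have hE : α ^ 2 - α + 1 < Real.exp α := by nlinarith [sq_nonneg (α - 3/2), mul_pos hα hα]
  have key : Real.exp (-α) - Real.exp (-2 * α) * (α ^ 2 - α + 1) =
      Real.exp (-2 * α) * (Real.exp α - (α ^ 2 - α + 1)) := by
    rw [mul_sub, ← Real.exp_add]; ring_nf
  rw [key]
  exact mul_pos (Real.exp_pos _) (by linarith)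
end

section
/- Let Y be the number of isolated vertices in K_{n,p} with mean μ and variance σ², and let β = (1-p)^{-n}. Then for all t > 0, P((Y - μ)/σ ≤ -t) ≤ exp(-(t²/2) · σ²/(μ(β+1))). -/
open scoped Classical
open MeasureTheory Finset

/-- The number of isolated vertices of a graph on `Fin n` described by its indicator
of edges `ω` (indexed by ordered pairs `e.1.1 < e.1.2`). -/
noncomputable def isolatedCount (n : ℕ) (ω : {e : Fin n × Fin n // e.1 < e.2} → Bool) : ℝ :=
  ∑ v : Fin n,
    if ∀ e : {e : Fin n × Fin n // e.1 < e.2}, (e.1.1 = v ∨ e.1.2 = v) → ω e = false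
    then 1 else 0

/-- The Erdős–Rényi measure: each of the `n(n-1)/2` possible edges is present
independently with probability `p`. -/
noncomputable def erGraphMeasure (n : ℕ) (p : ℝ) (hp1 : p < 1) :
    Measure ({e : Fin n × Fin n // e.1 < e.2} → Bool) :=
  Measure.pi fun _ =>
    (PMF.bernoulli (Real.toNNReal p) (Real.toNNReal_le_one.mpr hp1.le)).toMeasure

namespace ERIso

abbrev Edge (n : ℕ) := {e : Fin n × Fin n // e.1 < e.2}
abbrev Omega (n : ℕ) := Edge n → Bool

variable {n : ℕ}

/-- Single-edge weight. -/
noncomputable def bern (p : ℝ) (b : Bool) : ℝ := if b then p else 1 - p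

/-- Probability weight of a configuration. -/
noncomputable def W (p : ℝ) (ω : Omega n) : ℝ := ∏ e, bern p (ω e)

/-- `e` is incident to `v`. -/
def inc (v : Fin n) (e : Edge n) : Prop := e.1.1 = v ∨ e.1.2 = v

instance (v : Fin n) : DecidablePred (inc v) := fun _ =>
  inferInstanceAs (Decidable (_ ∨ _))

/-- Remove all edges at `v`. -/
noncomputable def T (v : Fin n) (ω : Omega n) : Omega n :=
  fun e => if inc v e then false else ω e

/-- `v` is isolated. -/
def isol (v : Fin n) (ω : Omega n) : Prop := ∀ e : Edge n, inc v e → ω e = false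

instance (v : Fin n) (ω : Omega n) : Decidable (isol v ω) :=
  inferInstanceAs (Decidable (∀ _, _))

/-- Indicator that `v` is isolated. -/
noncomputable def Xv (v : Fin n) (ω : Omega n) : ℝ := if isol v ω then 1 else 0

lemma bern_nonneg {p : ℝ} (h0 : 0 ≤ p) (h1 : p ≤ 1) (b : Bool) : 0 ≤ bern p b := by
  cases b <;> simp [bern] <;> linarith

lemma bern_pos {p : ℝ} (h0 : 0 < p) (h1 : p < 1) (b : Bool) : 0 < bern p b := by
  cases b <;> simp [bern] <;> linarith

lemma W_nonneg {p : ℝ} (h0 : 0 ≤ p) (h1 : p ≤ 1) (ω : Omega n) : 0 ≤ W p ω :=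
  Finset.prod_nonneg fun _ _ => bern_nonneg h0 h1 _

lemma W_pos {p : ℝ} (h0 : 0 < p) (h1 : p < 1) (ω : Omega n) : 0 < W p ω :=
  Finset.prod_pos fun _ _ => bern_pos h0 h1 _

lemma isolatedCount_eq (ω : Omega n) : isolatedCount n ω = ∑ v, Xv v ω := by
  simp [isolatedCount, Xv, isol, inc]

/-- Generic: the bernoulli weights on any finite family of coordinates sum to 1. -/
lemma sum_bern {ι : Type*} [Fintype ι] [DecidableEq ι] (p : ℝ) :
    ∑ a : ι → Bool, ∏ i, bern p (a i) = 1 := by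
  rw [← Fintype.prod_sum (fun (_ : ι) (b : Bool) => bern p b)]
  simp [bern]

lemma sum_W (p : ℝ) : ∑ ω : Omega n, W p ω = 1 := sum_bern p

/-- The number of edges incident to `v` is `n - 1`. -/
lemma card_inc (v : Fin n) : Fintype.card {e : Edge n // inc v e} = n - 1 := by
  have eqv : {e : Edge n // inc v e} ≃ {u : Fin n // u ≠ v} :=
    { toFun := fun e =>
        if h : e.1.1.1 = v then ⟨e.1.1.2, fun hh => (e.1.2).ne (h.trans hh.symm)⟩
        else ⟨e.1.1.1, h⟩
      invFun := fun u =>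
        if h : (u : Fin n) < v then ⟨⟨(u, v), h⟩, Or.inr rfl⟩
        else ⟨⟨(v, u), lt_of_le_of_ne (not_lt.mp h) (Ne.symm u.2)⟩, Or.inl rfl⟩
      left_inv := by
        rintro ⟨⟨⟨a, b⟩, hab⟩, hinc⟩
        by_cases h : a = v
        · have hbv : ¬ (b : Fin n) < v := by
            subst h; exact fun hh => absurd hab (not_lt.mpr hh.le)
          subst h
          simp [hbv]
        · have hb : b = v := by
            rcases hinc with h' | h'
            · exact absurd h' h
            · exact h'
          have hav : (a : Fin n) < v := hb ▸ hab
          subst hb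
          simp [h, hav]
      right_inv := by
        rintro ⟨u, hu⟩
        by_cases h : (u : Fin n) < v
        · have huv : ¬ (u : Fin n) = v := hu
          simp [h, huv]
        · simp [h] }
  rw [Fintype.card_congr eqv]
  have h1 : Fintype.card {u : Fin n // u = v} = 1 := Fintype.card_subtype_eq v
  have := Fintype.card_subtype_compl (fun u : Fin n => u = v)
  simp only [h1, Fintype.card_fin] at this
  exact this

/-- Key independence/factorization identity. -/
lemma key (p : ℝ) (v : Fin n) (H : Omega n → ℝ) :
    ∑ ω : Omega n, W p ω * (Xv v ω * H (T v ω))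
      = (1 - p) ^ (n - 1) * ∑ ω : Omega n, W p ω * H (T v ω) := by
  set π := (Equiv.piEquivPiSubtypeProd (fun e : Edge n => inc v e) fun _ => Bool) with hπ
  have hsymm : ∀ (a : {e : Edge n // inc v e} → Bool) (b : {e : Edge n // ¬ inc v e} → Bool)
      (e : Edge n), π.symm (a, b) e = if h : inc v e then a ⟨e, h⟩ else b ⟨e, h⟩ := by
    intro a b e; simp [hπ, Equiv.piEquivPiSubtypeProd_symm_apply]
  have hW : ∀ a b, W p (π.symm (a, b)) =
      (∏ e : {e : Edge n // inc v e}, bern p (a e)) *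
      (∏ e : {e : Edge n // ¬ inc v e}, bern p (b e)) := by
    intro a b
    rw [W, ← Fintype.prod_subtype_mul_prod_subtype (fun e => inc v e)
      (fun e => bern p (π.symm (a, b) e))]
    congr 1
    · exact Finset.prod_congr rfl fun e _ => by rw [hsymm, dif_pos e.2]
    · exact Finset.prod_congr rfl fun e _ => by rw [hsymm, dif_neg e.2]
  have hT : ∀ a b, T v (π.symm (a, b)) = π.symm (fun _ => false, b) := by
    intro a b; funext e
    by_cases h : inc v e
    · simp only [T, if_pos h, hsymm, dif_pos h]
    · simp only [T, if_neg h, hsymm, dif_neg h]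
  have hX : ∀ a b, Xv v (π.symm (a, b))
      = if a = (fun _ => false) then (1 : ℝ) else 0 := by
    intro a b
    have hiff : isol v (π.symm (a, b)) ↔ a = (fun _ => false) := by
      constructor
      · intro h; funext e
        have := h e.1 e.2
        rwa [hsymm, dif_pos e.2] at this
      · intro h e he; rw [hsymm, dif_pos he, h]
    unfold Xv
    exact if_congr hiff rfl rfl
  have hA : ∑ a : {e : Edge n // inc v e} → Bool,
      (∏ e, bern p (a e)) * (if a = (fun _ => false) then (1 : ℝ) else 0)
      = (1 - p) ^ (n - 1) := by
    rw [Finset.sum_congr rfl (fun a _ => by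
      rw [mul_ite, mul_one, mul_zero])]
    rw [Finset.sum_ite_eq' Finset.univ (fun _ => false)
      (fun a => ∏ e, bern p (a e))]
    simp only [Finset.mem_univ, if_true]
    rw [Finset.prod_const, Finset.card_univ, card_inc v]
    simp [bern]
  have hB : ∑ ω : Omega n, W p ω * H (T v ω)
      = ∑ b : {e : Edge n // ¬ inc v e} → Bool, (∏ e, bern p (b e)) * H (π.symm (fun _ => false, b)) := by
    calc ∑ ω : Omega n, W p ω * H (T v ω)
        = ∑ y : ({e : Edge n // inc v e} → Bool) × ({e : Edge n // ¬ inc v e} → Bool),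
          W p (π.symm y) * H (T v (π.symm y)) :=
          (Fintype.sum_equiv π.symm _ _ (fun y => rfl)).symm
      _ = ∑ a : {e : Edge n // inc v e} → Bool, ∑ b : {e : Edge n // ¬ inc v e} → Bool, (∏ e, bern p (a e)) *
            ((∏ e, bern p (b e)) * H (π.symm (fun _ => false, b))) := by
          rw [Fintype.sum_prod_type]
          exact Finset.sum_congr rfl fun a _ => Finset.sum_congr rfl fun b _ => by
            rw [hW, hT]; ring
      _ = (∑ a : {e : Edge n // inc v e} → Bool, ∏ e, bern p (a e)) *
            (∑ b : {e : Edge n // ¬ inc v e} → Bool, (∏ e, bern p (b e)) * H (π.symm (fun _ => false, b))) :=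
          (Finset.sum_mul_sum _ _ _ _).symm
      _ = ∑ b : {e : Edge n // ¬ inc v e} → Bool, (∏ e, bern p (b e)) * H (π.symm (fun _ => false, b)) := by
          rw [sum_bern p, one_mul]
  calc ∑ ω : Omega n, W p ω * (Xv v ω * H (T v ω))
      = ∑ y : ({e : Edge n // inc v e} → Bool) × ({e : Edge n // ¬ inc v e} → Bool),
          W p (π.symm y) * (Xv v (π.symm y) * H (T v (π.symm y))) :=
        (Fintype.sum_equiv π.symm _ _ (fun y => rfl)).symm
    _ = ∑ a : {e : Edge n // inc v e} → Bool, ∑ b : {e : Edge n // ¬ inc v e} → Bool, ((∏ e, bern p (a e)) * (if a = (fun _ => false) then (1:ℝ) else 0)) *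
          ((∏ e, bern p (b e)) * H (π.symm (fun _ => false, b))) := by
        rw [Fintype.sum_prod_type]
        exact Finset.sum_congr rfl fun a _ => Finset.sum_congr rfl fun b _ => by
          rw [hW, hT, hX]; ring
    _ = (∑ a : {e : Edge n // inc v e} → Bool, (∏ e, bern p (a e)) * (if a = (fun _ => false) then (1:ℝ) else 0)) *
          (∑ b : {e : Edge n // ¬ inc v e} → Bool, (∏ e, bern p (b e)) * H (π.symm (fun _ => false, b))) :=
        (Finset.sum_mul_sum _ _ _ _).symm
    _ = (1 - p) ^ (n - 1) *
          (∑ b : {e : Edge n // ¬ inc v e} → Bool, (∏ e, bern p (b e)) * H (π.symm (fun _ => false, b))) := by rw [hA]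
    _ = (1 - p) ^ (n - 1) * ∑ ω : Omega n, W p ω * H (T v ω) := by rw [hB]

lemma T_eq_of_isol {v : Fin n} {ω : Omega n} (h : isol v ω) : T v ω = ω := by
  funext e
  by_cases he : inc v e
  · simp [T, he, (h e he).symm]
  · simp [T, he]

lemma isol_T {u v : Fin n} {ω : Omega n} (h : isol u ω) : isol u (T v ω) := by
  intro e he
  by_cases hv : inc v e <;> simp [T, hv, h e he]

/-- The size-bias increment bound: removing the edges at each `v` in turn increases the
isolated count by at most `2n` in total. -/
lemma sum_delta_le (ω : Omega n) :
    ∑ v : Fin n, (isolatedCount n (T v ω) - isolatedCount n ω) ≤ 2 * n := by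
  have h1 : ∀ v, isolatedCount n (T v ω) - isolatedCount n ω
      = ∑ u : Fin n, (Xv u (T v ω) - Xv u ω) := by
    intro v; rw [isolatedCount_eq, isolatedCount_eq, Finset.sum_sub_distrib]
  rw [Finset.sum_congr rfl fun v _ => h1 v, Finset.sum_comm]
  have key : ∀ u : Fin n, ∑ v : Fin n, (Xv u (T v ω) - Xv u ω) ≤ 2 := by
    intro u
    by_cases hiso : isol u ω
    · have hz : ∀ v : Fin n, Xv u (T v ω) - Xv u ω = 0 := fun v => by
        simp [Xv, hiso, isol_T hiso]
      rw [Finset.sum_congr rfl fun v _ => hz v]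
      simp
    · have hiso' := hiso
      rw [isol] at hiso'
      push_neg at hiso'
      obtain ⟨e0, he0, hne⟩ := hiso'
      have he0t : ω e0 = true := by simpa using hne
      set v' : Fin n := if e0.1.1 = u then e0.1.2 else e0.1.1 with hv'
      have hsub : ∀ v : Fin n, isol u (T v ω) → v = u ∨ v = v' := by
        intro v hv
        have h2 := hv e0 he0
        rw [T] at h2
        by_cases hvi : inc v e0
        · rcases hvi with h3 | h3
          · by_cases h4 : e0.1.1 = u
            · left; rw [← h3, h4]
            · right; rw [hv', if_neg h4, h3]
          · by_cases h4 : e0.1.1 = u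
            · right; rw [hv', if_pos h4, h3]
            · rcases he0 with h5 | h5
              · exact absurd h5 h4
              · left; rw [← h3, h5]
        · rw [if_neg hvi, he0t] at h2; exact absurd h2 (by simp)
      have hX0 : Xv u ω = 0 := if_neg hiso
      calc ∑ v : Fin n, (Xv u (T v ω) - Xv u ω)
          ≤ ∑ v : Fin n, (if v = u ∨ v = v' then (1 : ℝ) else 0) := by
            apply Finset.sum_le_sum
            intro v _
            rw [hX0, sub_zero, Xv]
            by_cases hv : isol u (T v ω)
            · rw [if_pos hv, if_pos (hsub v hv)]
            · rw [if_neg hv]; split <;> norm_num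
        _ ≤ 2 := by
            rw [Finset.sum_boole]
            have hsubset : Finset.univ.filter (fun v : Fin n => v = u ∨ v = v')
                ⊆ ({u, v'} : Finset (Fin n)) := by
              intro x hx
              simp only [Finset.mem_filter, Finset.mem_univ, true_and] at hx
              simpa [Finset.mem_insert, Finset.mem_singleton] using hx
            have hc := Finset.card_le_card hsubset
            have hc2 : ({u, v'} : Finset (Fin n)).card ≤ 2 := by
              apply le_trans (Finset.card_insert_le u {v'})
              simp
            have : (Finset.univ.filter (fun v : Fin n => v = u ∨ v = v')).card ≤ 2 :=
              le_trans hc hc2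
            exact_mod_cast this
  calc ∑ u : Fin n, ∑ v : Fin n, (Xv u (T v ω) - Xv u ω)
      ≤ ∑ _u : Fin n, (2 : ℝ) := Finset.sum_le_sum fun u _ => key u
    _ = 2 * n := by simp [mul_comm]

/-- Moment generating function of the isolated-vertex count. -/
noncomputable def Mgf (p : ℝ) (n : ℕ) (θ : ℝ) : ℝ :=
  ∑ ω : Omega n, W p ω * Real.exp (θ * isolatedCount n ω)

/-- Its derivative. -/
noncomputable def Mgf' (p : ℝ) (n : ℕ) (θ : ℝ) : ℝ :=
  ∑ ω : Omega n, W p ω * (isolatedCount n ω * Real.exp (θ * isolatedCount n ω))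

lemma hasDerivAt_Mgf (p : ℝ) (θ : ℝ) : HasDerivAt (Mgf p n) (Mgf' p n θ) θ := by
  have h : ∀ ω ∈ Finset.univ (α := Omega n), HasDerivAt
      (fun θ : ℝ => W p ω * Real.exp (θ * isolatedCount n ω))
      (W p ω * (isolatedCount n ω * Real.exp (θ * isolatedCount n ω))) θ := by
    intro ω _
    have h1 : HasDerivAt (fun θ : ℝ => θ * isolatedCount n ω) (isolatedCount n ω) θ :=
      hasDerivAt_mul_const _
    have h2 := h1.exp
    have h3 := h2.const_mul (W p ω)
    rw [show W p ω * (isolatedCount n ω * Real.exp (θ * isolatedCount n ω)) = W p ω * (Real.exp (θ * isolatedCount n ω) * isolatedCount n ω) by ring]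
    exact h3
  have := HasDerivAt.fun_sum h
  exact this

lemma Mgf_pos {p : ℝ} (hp0 : 0 < p) (hp1 : p < 1) (θ : ℝ) : 0 < Mgf p n θ :=
  Finset.sum_pos (fun ω _ => mul_pos (W_pos hp0 hp1 ω) (Real.exp_pos _))
    ⟨fun _ => false, Finset.mem_univ _⟩

lemma Mgf_zero (p : ℝ) : Mgf p n 0 = 1 := by
  simp [Mgf, sum_W]

lemma Mgf'_ge {p : ℝ} (hp0 : 0 < p) (hp1 : p < 1) {θ : ℝ} (hθ : θ ≤ 0) :
    ((n : ℝ) * (1 - p) ^ (n - 1)) * (1 + 2 * θ) * Mgf p n θ ≤ Mgf' p n θ := by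
  have step1 : Mgf' p n θ = (1 - p) ^ (n - 1) *
      ∑ ω : Omega n, W p ω * ∑ v : Fin n, Real.exp (θ * isolatedCount n (T v ω)) := by
    have hY : ∀ ω : Omega n,
        W p ω * (isolatedCount n ω * Real.exp (θ * isolatedCount n ω))
        = ∑ v : Fin n, W p ω * (Xv v ω * Real.exp (θ * isolatedCount n ω)) := by
      intro ω
      rw [isolatedCount_eq ω, Finset.sum_mul, Finset.mul_sum]
    have hpt : ∀ (v : Fin n) (ω : Omega n),
        W p ω * (Xv v ω * Real.exp (θ * isolatedCount n ω))
        = W p ω * (Xv v ω * Real.exp (θ * isolatedCount n (T v ω))) := by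
      intro v ω
      by_cases h : isol v ω
      · rw [T_eq_of_isol h]
      · simp [Xv, h]
    calc Mgf' p n θ
        = ∑ ω : Omega n, ∑ v : Fin n,
            W p ω * (Xv v ω * Real.exp (θ * isolatedCount n ω)) := by
          rw [Mgf']
          exact Finset.sum_congr rfl fun ω _ => hY ω
      _ = ∑ v : Fin n, ∑ ω : Omega n,
            W p ω * (Xv v ω * Real.exp (θ * isolatedCount n (T v ω))) := by
          rw [Finset.sum_comm]
          exact Finset.sum_congr rfl fun v _ => Finset.sum_congr rfl fun ω _ => hpt v ω
      _ = ∑ v : Fin n, (1 - p) ^ (n - 1) * ∑ ω : Omega n,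
            W p ω * Real.exp (θ * isolatedCount n (T v ω)) :=
          Finset.sum_congr rfl fun v _ =>
            key p v (fun ω' => Real.exp (θ * isolatedCount n ω'))
      _ = (1 - p) ^ (n - 1) * ∑ ω : Omega n, W p ω *
            ∑ v : Fin n, Real.exp (θ * isolatedCount n (T v ω)) := by
          rw [← Finset.mul_sum]
          congr 1
          rw [Finset.sum_comm]
          exact Finset.sum_congr rfl fun ω _ => (Finset.mul_sum _ _ _).symm
  rw [step1]
  have hpoint : ∀ ω : Omega n,
      W p ω * (((n : ℝ) * (1 + 2 * θ)) * Real.exp (θ * isolatedCount n ω))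
      ≤ W p ω * ∑ v : Fin n, Real.exp (θ * isolatedCount n (T v ω)) := by
    intro ω
    apply mul_le_mul_of_nonneg_left _ (W_nonneg hp0.le hp1.le ω)
    have h1 : ∀ v : Fin n, Real.exp (θ * isolatedCount n ω) *
        (1 + θ * (isolatedCount n (T v ω) - isolatedCount n ω))
        ≤ Real.exp (θ * isolatedCount n (T v ω)) := by
      intro v
      have h2 : θ * isolatedCount n (T v ω) =
          θ * isolatedCount n ω + θ * (isolatedCount n (T v ω) - isolatedCount n ω) := by
        ring
      rw [h2, Real.exp_add]
      apply mul_le_mul_of_nonneg_left _ (Real.exp_pos _).le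
      have := Real.add_one_le_exp (θ * (isolatedCount n (T v ω) - isolatedCount n ω))
      linarith
    have hs : ∑ v : Fin n, Real.exp (θ * isolatedCount n ω) *
        (1 + θ * (isolatedCount n (T v ω) - isolatedCount n ω))
        = Real.exp (θ * isolatedCount n ω) *
          ((n : ℝ) + θ * ∑ v : Fin n, (isolatedCount n (T v ω) - isolatedCount n ω)) := by
      rw [← Finset.mul_sum]
      congr 1
      rw [Finset.sum_add_distrib, Finset.sum_const, ← Finset.mul_sum]
      simp [Finset.card_univ]
    have hΔ := sum_delta_le ω
    have hθΔ : θ * (2 * (n : ℝ)) ≤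
        θ * ∑ v : Fin n, (isolatedCount n (T v ω) - isolatedCount n ω) :=
      mul_le_mul_of_nonpos_left hΔ hθ
    have hE := (Real.exp_pos (θ * isolatedCount n ω)).le
    calc (n : ℝ) * (1 + 2 * θ) * Real.exp (θ * isolatedCount n ω)
        ≤ ∑ v : Fin n, Real.exp (θ * isolatedCount n ω) *
            (1 + θ * (isolatedCount n (T v ω) - isolatedCount n ω)) := by
          rw [hs]
          nlinarith [hθΔ, hE]
      _ ≤ ∑ v : Fin n, Real.exp (θ * isolatedCount n (T v ω)) :=
          Finset.sum_le_sum fun v _ => h1 v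
  have hsum : ∑ ω : Omega n,
      W p ω * (((n : ℝ) * (1 + 2 * θ)) * Real.exp (θ * isolatedCount n ω))
      ≤ ∑ ω : Omega n, W p ω * ∑ v : Fin n, Real.exp (θ * isolatedCount n (T v ω)) :=
    Finset.sum_le_sum fun ω _ => hpoint ω
  have hq : (0 : ℝ) ≤ (1 - p) ^ (n - 1) := pow_nonneg (by linarith) _
  have hL : ∑ ω : Omega n,
      W p ω * (((n : ℝ) * (1 + 2 * θ)) * Real.exp (θ * isolatedCount n ω))
      = ((n : ℝ) * (1 + 2 * θ)) * Mgf p n θ := by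
    rw [Mgf, Finset.mul_sum]
    exact Finset.sum_congr rfl fun ω _ => by ring
  calc ((n : ℝ) * (1 - p) ^ (n - 1)) * (1 + 2 * θ) * Mgf p n θ
      = (1 - p) ^ (n - 1) * (((n : ℝ) * (1 + 2 * θ)) * Mgf p n θ) := by ring
    _ ≤ (1 - p) ^ (n - 1) * ∑ ω : Omega n, W p ω *
          ∑ v : Fin n, Real.exp (θ * isolatedCount n (T v ω)) := by
        apply mul_le_mul_of_nonneg_left _ hq
        rw [← hL]
        exact hsum

lemma Mgf_le {p : ℝ} (hp0 : 0 < p) (hp1 : p < 1) {θ0 : ℝ} (hθ0 : θ0 ≤ 0) :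
    Mgf p n θ0 ≤ Real.exp (((n : ℝ) * (1 - p) ^ (n - 1)) * θ0
      + ((n : ℝ) * (1 - p) ^ (n - 1)) * θ0 ^ 2) := by
  set μ := (n : ℝ) * (1 - p) ^ (n - 1) with hμdef
  set g : ℝ → ℝ := fun θ => Real.log (Mgf p n θ) - (μ * θ + μ * θ ^ 2) with hgdef
  have hgd : ∀ θ : ℝ, HasDerivAt g (Mgf' p n θ / Mgf p n θ - (μ + μ * (2 * θ))) θ := by
    intro θ
    have h1 := (hasDerivAt_Mgf (n := n) p θ).log (Mgf_pos hp0 hp1 θ).ne'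
    have h2 : HasDerivAt (fun θ : ℝ => μ * θ + μ * θ ^ 2) (μ + μ * (2 * θ)) θ := by
      have ha : HasDerivAt (fun θ : ℝ => μ * θ) μ θ := by
        simpa using (hasDerivAt_id θ).const_mul μ
      have hb : HasDerivAt (fun θ : ℝ => μ * θ ^ 2) (μ * (2 * θ)) θ := by
        have := (hasDerivAt_pow 2 θ).const_mul μ
        simpa [mul_comm, mul_assoc, mul_left_comm] using this
      exact ha.add hb
    exact h1.sub h2
  have hdiff : Differentiable ℝ g := fun θ => (hgd θ).differentiableAt
  have hmono : MonotoneOn g (Set.Icc θ0 0) := by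
    apply monotoneOn_of_deriv_nonneg (convex_Icc θ0 0) hdiff.continuous.continuousOn
      (hdiff.differentiableOn)
    intro θ hθ
    rw [interior_Icc] at hθ
    rw [(hgd θ).deriv]
    have hθneg : θ ≤ 0 := le_of_lt hθ.2
    have hm := Mgf_pos (n := n) hp0 hp1 θ
    have hge := Mgf'_ge (n := n) hp0 hp1 hθneg
    rw [sub_nonneg, le_div_iff₀ hm]
    calc (μ + μ * (2 * θ)) * Mgf p n θ = μ * (1 + 2 * θ) * Mgf p n θ := by ring
      _ ≤ Mgf' p n θ := by
        calc μ * (1 + 2 * θ) * Mgf p n θ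
            = ((n : ℝ) * (1 - p) ^ (n - 1)) * (1 + 2 * θ) * Mgf p n θ := by rw [hμdef]
          _ ≤ Mgf' p n θ := hge
  have h0 : g 0 = 0 := by
    simp [hgdef, Mgf_zero]
  have hle : g θ0 ≤ 0 := by
    rcases eq_or_lt_of_le hθ0 with h | h
    · rw [h, h0]
    · have := hmono (Set.mem_Icc.mpr ⟨le_refl θ0, hθ0⟩)
        (Set.mem_Icc.mpr ⟨hθ0, le_refl (0 : ℝ)⟩) hθ0
      rw [h0] at this
      exact this
  have hlog : Real.log (Mgf p n θ0) ≤ μ * θ0 + μ * θ0 ^ 2 := by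
    have := hle
    rw [hgdef] at this
    simp only at this
    linarith
  calc Mgf p n θ0 = Real.exp (Real.log (Mgf p n θ0)) :=
        (Real.exp_log (Mgf_pos hp0 hp1 θ0)).symm
    _ ≤ Real.exp (μ * θ0 + μ * θ0 ^ 2) := Real.exp_le_exp.mpr hlog

lemma measure_singleton {p : ℝ} (hp0 : 0 ≤ p) (hp1 : p < 1) (ω : Omega n) :
    erGraphMeasure n p hp1 {ω} = ENNReal.ofReal (W p ω) := by
  have hset : ({ω} : Set (Omega n)) = Set.pi Set.univ (fun e => {ω e}) := by
    ext x
    simp [Set.mem_pi, funext_iff]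
  rw [erGraphMeasure, hset, Measure.pi_pi]
  have hb : ∀ e : Edge n, (PMF.bernoulli (Real.toNNReal p)
      (Real.toNNReal_le_one.mpr hp1.le)).toMeasure {ω e}
      = ENNReal.ofReal (bern p (ω e)) := by
    intro e
    rw [PMF.toMeasure_apply_singleton _ _ (measurableSet_singleton _)]
    cases hωe : ω e
    · simp only [PMF.bernoulli_apply, Bool.cond_false, bern, Bool.false_eq_true, if_false]
      rw [ENNReal.ofReal_sub 1 hp0]
      simp
      rfl
    · simp [PMF.bernoulli_apply, bern]
      rfl
  rw [Finset.prod_congr rfl fun e _ => hb e,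
    ← ENNReal.ofReal_prod_of_nonneg (fun e _ => bern_nonneg hp0 hp1.le _)]
  rfl

lemma measure_set {p : ℝ} (hp0 : 0 ≤ p) (hp1 : p < 1) (s : Set (Omega n)) :
    ((erGraphMeasure n p hp1) s).toReal
      = ∑ ω ∈ Finset.univ.filter (fun ω : Omega n => ω ∈ s), W p ω := by
  have hms : s = ⋃ ω ∈ Finset.univ.filter (fun ω : Omega n => ω ∈ s),
      ({ω} : Set (Omega n)) := by
    ext x
    simp
  conv_lhs => rw [hms]
  rw [measure_biUnion_finset]
  · rw [ENNReal.toReal_sum (fun ω _ => by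
      rw [measure_singleton hp0 hp1 ω]; exact ENNReal.ofReal_ne_top)]
    exact Finset.sum_congr rfl fun ω _ => by
      rw [measure_singleton hp0 hp1 ω, ENNReal.toReal_ofReal (W_nonneg hp0 hp1.le ω)]
  · intro x _ y _ hxy
    simp [Function.onFun, Set.disjoint_singleton, hxy]
  · intro ω _
    exact measurableSet_singleton ω

end ERIso

/-- Left tail bound for the number `Y` of isolated vertices of `K_{n,p}`:
`P((Y-μ)/σ ≤ -t) ≤ exp(-(t²/2)·σ²/(μ(β+1)))` with `β = (1-p)^{-n}`. -/
theorem erdos_renyi_isolated_left_tail (n : ℕ) (hn : 1 ≤ n)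
    (p : ℝ) (hp0 : 0 < p) (hp1 : p < 1) (μ σ β : ℝ)
    (hμ : μ = n * (1 - p) ^ (n - 1))
    (hσ : σ = Real.sqrt (n * (1 - p) ^ (n - 1) *
      (1 + n * p * (1 - p) ^ (n - 2) - (1 - p) ^ (n - 2))))
    (hβ : β = (1 - p) ^ (-(n : ℤ))) :
    ∀ t > (0 : ℝ),
      ((erGraphMeasure n p hp1) {ω | (isolatedCount n ω - μ) / σ ≤ -t}).toReal ≤
        Real.exp (-(t ^ 2 / 2) * (σ ^ 2 / (μ * (β + 1)))) := by
  intro t ht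
  have hq0 : (0 : ℝ) < 1 - p := by linarith
  have hn' : (0 : ℝ) < n := by exact_mod_cast hn
  have hμpos : 0 < μ := by
    rw [hμ]
    exact mul_pos hn' (pow_pos hq0 _)
  have hβ1 : 1 ≤ β := by
    rw [hβ, zpow_neg, zpow_natCast]
    have h1 : 0 < (1 - p) ^ n := pow_pos hq0 n
    have h2 : (1 - p) ^ n ≤ 1 := pow_le_one₀ hq0.le (by linarith)
    have h3 := mul_inv_cancel₀ h1.ne'
    nlinarith [inv_pos.mpr h1]
  have hσpos : 0 < σ := by
    rw [hσ]
    apply Real.sqrt_pos.mpr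
    have hq2 : (1 - p) ^ (n - 2) ≤ 1 := pow_le_one₀ hq0.le (by linarith)
    have hq2' : 0 < (1 - p) ^ (n - 2) := pow_pos hq0 _
    have hq1' : 0 < (1 - p) ^ (n - 1) := pow_pos hq0 _
    apply mul_pos (mul_pos hn' hq1')
    nlinarith [mul_pos (mul_pos hn' hp0) hq2']
  set x : ℝ := t * σ with hx
  have hxpos : 0 < x := mul_pos ht hσpos
  set c : ℝ := μ * (β + 1) with hc
  have hcpos : 0 < c := mul_pos hμpos (by linarith)
  set θ0 : ℝ := -x / c with hθ0def
  have hθ0neg : θ0 ≤ 0 := by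
    rw [hθ0def]
    apply div_nonpos_of_nonpos_of_nonneg <;> nlinarith
  rw [ERIso.measure_set hp0.le hp1]
  have hmem : ∀ ω : ERIso.Omega n,
      ω ∈ Finset.univ.filter (fun ω : ERIso.Omega n =>
        ω ∈ {ω | (isolatedCount n ω - μ) / σ ≤ -t}) →
      isolatedCount n ω ≤ μ - x := by
    intro ω hω
    simp only [Finset.mem_filter, Set.mem_setOf_eq] at hω
    have h2 := hω.2
    rw [div_le_iff₀ hσpos] at h2
    rw [hx]
    linarith
  calc ∑ ω ∈ Finset.univ.filter (fun ω : ERIso.Omega n =>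
        ω ∈ {ω | (isolatedCount n ω - μ) / σ ≤ -t}), ERIso.W p ω
      ≤ ∑ ω ∈ Finset.univ.filter (fun ω : ERIso.Omega n =>
          ω ∈ {ω | (isolatedCount n ω - μ) / σ ≤ -t}),
          ERIso.W p ω * Real.exp (θ0 * (isolatedCount n ω - (μ - x))) := by
        apply Finset.sum_le_sum
        intro ω hω
        have h1 : 0 ≤ θ0 * (isolatedCount n ω - (μ - x)) := by
          have := hmem ω hω
          nlinarith
        have h2 : (1 : ℝ) ≤ Real.exp (θ0 * (isolatedCount n ω - (μ - x))) := by
          calc (1 : ℝ) = Real.exp 0 := Real.exp_zero.symm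
            _ ≤ _ := Real.exp_le_exp.mpr h1
        nlinarith [ERIso.W_nonneg hp0.le hp1.le ω]
    _ ≤ ∑ ω : ERIso.Omega n,
          ERIso.W p ω * Real.exp (θ0 * (isolatedCount n ω - (μ - x))) := by
        apply Finset.sum_le_sum_of_subset_of_nonneg (Finset.filter_subset _ _)
        intro ω _ _
        exact mul_nonneg (ERIso.W_nonneg hp0.le hp1.le ω) (Real.exp_pos _).le
    _ = Real.exp (-θ0 * (μ - x)) * ERIso.Mgf p n θ0 := by
        rw [ERIso.Mgf, Finset.mul_sum]
        apply Finset.sum_congr rfl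
        intro ω _
        rw [← mul_assoc, mul_comm (Real.exp (-θ0 * (μ - x))) (ERIso.W p ω), mul_assoc,
          ← Real.exp_add]
        congr 2
        ring
    _ ≤ Real.exp (-θ0 * (μ - x)) * Real.exp (μ * θ0 + μ * θ0 ^ 2) := by
        apply mul_le_mul_of_nonneg_left _ (Real.exp_pos _).le
        have := ERIso.Mgf_le (n := n) hp0 hp1 hθ0neg
        rw [← hμ] at this
        exact this
    _ = Real.exp (θ0 * x + μ * θ0 ^ 2) := by
        rw [← Real.exp_add]
        congr 1
        ring
    _ ≤ Real.exp (-(t ^ 2 / 2) * (σ ^ 2 / (μ * (β + 1)))) := by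
        apply Real.exp_le_exp.mpr
        have hrhs : -(t ^ 2 / 2) * (σ ^ 2 / (μ * (β + 1))) = -(x ^ 2) / (2 * c) := by
          rw [hx, hc]
          field_simp
        rw [hrhs, hθ0def]
        have h2μ : 2 * μ ≤ c := by
          rw [hc]
          nlinarith
        have e1 : -x / c * x + μ * (-x / c) ^ 2 = x ^ 2 * (μ / c ^ 2 - 1 / c) := by
          field_simp
          ring
        have e2 : -x ^ 2 / (2 * c) = x ^ 2 * (-(1 / (2 * c))) := by ring
        rw [e1, e2]
        apply mul_le_mul_of_nonneg_left _ (sq_nonneg x)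
        have e3 : (μ / c ^ 2 - 1 / c) - (-(1 / (2 * c))) = (2 * μ - c) / (2 * c ^ 2) := by
          field_simp
          ring
        have e4 : (2 * μ - c) / (2 * c ^ 2) ≤ 0 :=
          div_nonpos_of_nonpos_of_nonneg (by linarith) (by positivity)
        linarith [e3 ▸ e4]
end
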